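/- arXiv:2202.01563 — 6 statements merged into one kernel-verified Lean document; each statement's English description precedes it below -/
import Mathlib

section
/- Let p, q be probability distributions on [0,1] with X ∼ p and Y ∼ q. If |E[X^m] − E[Y^m]| ≤ γ for all m ∈ {1,…,d}, then for any T > 1, ∫_0^T |ψ_q(t) − ψ_p(t)|/t dt ≤ e^T (γ + T^{d+1}/(d!·d)), where ψ_p, ψ_q are the characteristic functions of p, q. -/
open MeasureTheory Set Complex

lemma tail_bound' (z : ℂ) (n : ℕ) :
    ‖Complex.exp z - ∑ m ∈ Finset.range n, z ^ m / m.factorial‖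
      ≤ ‖z‖ ^ n / n.factorial * Real.exp ‖z‖ := by
  have hsum : Summable fun m : ℕ => z ^ m / (m.factorial : ℂ) :=
    NormedSpace.expSeries_div_summable z
  have hexp : Complex.exp z = ∑' m : ℕ, z ^ m / m.factorial := by
    rw [Complex.exp_eq_exp_ℂ, NormedSpace.exp_eq_tsum_div]
  have hsplit : Complex.exp z - ∑ m ∈ Finset.range n, z ^ m / m.factorial
      = ∑' k : ℕ, z ^ (k + n) / ((k + n).factorial : ℂ) := by
    rw [hexp, ← Summable.sum_add_tsum_nat_add n hsum]
    ring
  have hb : Summable fun k : ℕ => ‖z‖ ^ n / n.factorial * (‖z‖ ^ k / k.factorial) :=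
    (Real.summable_pow_div_factorial ‖z‖).mul_left _
  have h1 : ∀ k : ℕ, ‖z ^ (k + n) / ((k + n).factorial : ℂ)‖
      ≤ ‖z‖ ^ n / n.factorial * (‖z‖ ^ k / k.factorial) := by
    intro k
    rw [norm_div, norm_pow]
    have : ‖((k + n).factorial : ℂ)‖ = ((k + n).factorial : ℝ) := by
      simp
    rw [this, pow_add, div_mul_div_comm, mul_comm (‖z‖ ^ k)]
    gcongr
    · have := Nat.le_of_dvd (k + n).factorial_pos
        (Nat.factorial_mul_factorial_dvd_factorial_add k n)
      exact_mod_cast Nat.mul_comm k.factorial n.factorial ▸ this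
  have hns : Summable fun k : ℕ => ‖z ^ (k + n) / ((k + n).factorial : ℂ)‖ :=
    Summable.of_nonneg_of_le (fun k => norm_nonneg _) h1 hb
  rw [hsplit]
  calc ‖∑' k : ℕ, z ^ (k + n) / ((k + n).factorial : ℂ)‖
      ≤ ∑' k : ℕ, ‖z ^ (k + n) / ((k + n).factorial : ℂ)‖ := norm_tsum_le_tsum_norm hns
    _ ≤ ∑' k : ℕ, ‖z‖ ^ n / n.factorial * (‖z‖ ^ k / k.factorial) :=
        Summable.tsum_le_tsum h1 hns hb
    _ = ‖z‖ ^ n / n.factorial * ∑' k : ℕ, ‖z‖ ^ k / k.factorial := tsum_mul_left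
    _ = ‖z‖ ^ n / n.factorial * Real.exp ‖z‖ := by
        congr 1
        rw [Real.exp_eq_exp_ℝ, NormedSpace.exp_eq_tsum_div]

lemma char_taylor' (μ : Measure ℝ) [IsProbabilityMeasure μ]
    (hμ : μ (Set.Icc (0:ℝ) 1)ᶜ = 0) {t : ℝ} (ht : 0 ≤ t) (n : ℕ) :
    ‖(∫ x, Complex.exp (t * x * Complex.I) ∂μ)
        - ∑ m ∈ Finset.range (n + 1),
            ((t : ℂ) * Complex.I) ^ m / m.factorial * ((∫ x, x ^ m ∂μ : ℝ) : ℂ)‖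
      ≤ t ^ (n + 1) / (n + 1).factorial * Real.exp t := by
  have hae : ∀ᵐ x ∂μ, x ∈ Set.Icc (0:ℝ) 1 := by
    rw [MeasureTheory.ae_iff]
    exact hμ
  have hexp_int : Integrable (fun x : ℝ => Complex.exp (t * x * Complex.I)) μ := by
    refine (integrable_const (1:ℝ)).mono' (Continuous.aestronglyMeasurable (by fun_prop)) ?_
    refine Filter.Eventually.of_forall fun x => ?_
    rw [Complex.norm_exp]
    simp
  have hxm : ∀ m : ℕ, Integrable (fun x : ℝ => ((x : ℂ)) ^ m) μ := by
    intro m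
    refine (integrable_const (1:ℝ)).mono' (Continuous.aestronglyMeasurable (by fun_prop)) ?_
    refine hae.mono fun x hx => ?_
    rw [norm_pow, Complex.norm_real]
    exact pow_le_one₀ (norm_nonneg _) (by rw [Real.norm_eq_abs]; exact abs_le.2 ⟨by linarith [hx.1], hx.2⟩)
  have hterm_int : ∀ m : ℕ, Integrable (fun x : ℝ => ((t : ℂ) * x * Complex.I) ^ m / m.factorial) μ := by
    intro m
    have he : (fun x : ℝ => ((t : ℂ) * x * Complex.I) ^ m / m.factorial)
        = fun x : ℝ => ((t : ℂ) * Complex.I) ^ m / m.factorial * (x : ℂ) ^ m := by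
      funext x; ring
    rw [he]
    exact (hxm m).const_mul _
  have hterm : ∀ m : ℕ, ((t : ℂ) * Complex.I) ^ m / m.factorial * ((∫ x, x ^ m ∂μ : ℝ) : ℂ)
      = ∫ x, ((t : ℂ) * x * Complex.I) ^ m / m.factorial ∂μ := by
    intro m
    rw [show ((∫ x, x ^ m ∂μ : ℝ) : ℂ) = ∫ x, ((x ^ m : ℝ) : ℂ) ∂μ from integral_ofReal.symm,
      ← MeasureTheory.integral_const_mul]
    congr 1
    funext x
    push_cast
    ring
  have hF : (∫ x, Complex.exp (t * x * Complex.I) ∂μ)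
        - ∑ m ∈ Finset.range (n + 1),
            ((t : ℂ) * Complex.I) ^ m / m.factorial * ((∫ x, x ^ m ∂μ : ℝ) : ℂ)
      = ∫ x, (Complex.exp (t * x * Complex.I)
          - ∑ m ∈ Finset.range (n + 1), ((t : ℂ) * x * Complex.I) ^ m / m.factorial) ∂μ := by
    rw [integral_sub hexp_int (integrable_finset_sum _ fun m _ => hterm_int m),
      integral_finset_sum _ fun m _ => hterm_int m]
    congr 1
    exact Finset.sum_congr rfl fun m _ => hterm m
  rw [hF]
  have hbound : ∀ᵐ x : ℝ ∂μ, ‖Complex.exp (t * x * Complex.I)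
      - ∑ m ∈ Finset.range (n + 1), ((t : ℂ) * x * Complex.I) ^ m / m.factorial‖
      ≤ t ^ (n + 1) / (n + 1).factorial * Real.exp t := by
    refine hae.mono fun x hx => ?_
    refine (tail_bound' _ _).trans ?_
    have hnorm : ‖(t : ℂ) * x * Complex.I‖ = t * x := by
      simp only [norm_mul, Complex.norm_real, Complex.norm_I, mul_one, Real.norm_eq_abs]
      rw [_root_.abs_of_nonneg ht, _root_.abs_of_nonneg hx.1]
    rw [hnorm]
    have h1 : t * x ≤ t := by nlinarith [hx.1, hx.2]
    have h0 : 0 ≤ t * x := mul_nonneg ht hx.1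
    gcongr
  calc ‖∫ x : ℝ, (Complex.exp (t * x * Complex.I)
          - ∑ m ∈ Finset.range (n + 1), ((t : ℂ) * x * Complex.I) ^ m / m.factorial) ∂μ‖
      ≤ t ^ (n + 1) / (n + 1).factorial * Real.exp t * (μ (Set.univ : Set ℝ)).toReal :=
        norm_integral_le_of_norm_le_const hbound
    _ = t ^ (n + 1) / (n + 1).factorial * Real.exp t := by simp

/-- If the first `d` moments of two probability measures on `[0,1]` are `γ`-close, then
for any `T > 1` the integral `∫_0^T |ψ_q(t) − ψ_p(t)|/t dt` of the normalized difference
of characteristic functions is at most `e^T (γ + T^{d+1}/(d!·d))`. -/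
theorem charFun_int_le_of_moments_close
    (p q : Measure ℝ) [IsProbabilityMeasure p] [IsProbabilityMeasure q]
    (hp : p (Set.Icc (0:ℝ) 1)ᶜ = 0) (hq : q (Set.Icc (0:ℝ) 1)ᶜ = 0)
    (d : ℕ) (hd : 1 ≤ d) (γ : ℝ)
    (hmom : ∀ m ∈ Finset.Icc 1 d, |(∫ x, x ^ m ∂p) - ∫ x, x ^ m ∂q| ≤ γ)
    (T : ℝ) (hT : 1 < T) :
    (∫ t in (0:ℝ)..T,
        ‖(∫ x, Complex.exp (t * x * Complex.I) ∂q)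
            - ∫ x, Complex.exp (t * x * Complex.I) ∂p‖ / t)
      ≤ Real.exp T * (γ + T ^ (d + 1) / (d.factorial * d)) := by
  have hT0 : (0:ℝ) < T := lt_trans one_pos hT
  have hd0 : (0:ℝ) < d := by exact_mod_cast Nat.lt_of_lt_of_le Nat.zero_lt_one hd
  have hγ : 0 ≤ γ := (abs_nonneg _).trans (hmom 1 (Finset.mem_Icc.2 ⟨le_refl 1, hd⟩))
  set ψq : ℝ → ℂ := fun t => ∫ x, Complex.exp (t * x * Complex.I) ∂q with hψq
  set ψp : ℝ → ℂ := fun t => ∫ x, Complex.exp (t * x * Complex.I) ∂p with hψp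
  set Sq : ℝ → ℂ := fun t => ∑ m ∈ Finset.range (d + 1),
      ((t : ℂ) * Complex.I) ^ m / m.factorial * ((∫ x, x ^ m ∂q : ℝ) : ℂ) with hSq
  set Sp : ℝ → ℂ := fun t => ∑ m ∈ Finset.range (d + 1),
      ((t : ℂ) * Complex.I) ^ m / m.factorial * ((∫ x, x ^ m ∂p : ℝ) : ℂ) with hSp
  set h : ℝ → ℝ := fun t => γ * ∑ i ∈ Finset.range d, t ^ i / (i + 1).factorial
      + 2 * Real.exp T * (t ^ d / (d + 1).factorial) with hh
  -- bound on the difference of Taylor polynomials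
  have hS : ∀ t : ℝ, ‖Sq t - Sp t‖
      ≤ γ * ∑ i ∈ Finset.range d, |t| ^ (i + 1) / (i + 1).factorial := by
    intro t
    have h0q : (∫ x, x ^ (0:ℕ) ∂q) = (1:ℝ) := by simp
    have h0p : (∫ x, x ^ (0:ℕ) ∂p) = (1:ℝ) := by simp
    have hsub : Sq t - Sp t = ∑ i ∈ Finset.range d,
        ((t : ℂ) * Complex.I) ^ (i + 1) / (i + 1).factorial
          * (((∫ x, x ^ (i + 1) ∂q : ℝ) : ℂ) - ((∫ x, x ^ (i + 1) ∂p : ℝ) : ℂ)) := by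
      rw [hSq, hSp, ← Finset.sum_sub_distrib,
        Finset.sum_congr rfl (fun m _ =>
          (mul_sub (((t : ℂ) * Complex.I) ^ m / m.factorial)
            ((∫ x, x ^ m ∂q : ℝ) : ℂ) ((∫ x, x ^ m ∂p : ℝ) : ℂ)).symm),
        Finset.sum_range_succ']
      simp [h0q, h0p]
    rw [hsub]
    refine (norm_sum_le _ _).trans ?_
    rw [Finset.mul_sum]
    refine Finset.sum_le_sum fun i hi => ?_
    have him : i + 1 ∈ Finset.Icc 1 d :=
      Finset.mem_Icc.2 ⟨Nat.le_add_left 1 i, Finset.mem_range.1 hi⟩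
    have hc : ‖((t:ℂ) * Complex.I) ^ (i+1) / ((i+1).factorial : ℂ)‖
        = |t| ^ (i+1) / ((i+1).factorial : ℝ) := by
      rw [norm_div, norm_pow]
      congr 1
      · congr 1
        simp [norm_mul, Complex.norm_real, Complex.norm_I]
      · simp
    have hab : ‖((∫ x, x ^ (i+1) ∂q : ℝ) : ℂ) - ((∫ x, x ^ (i+1) ∂p : ℝ) : ℂ)‖
        = |(∫ x, x ^ (i+1) ∂q) - (∫ x, x ^ (i+1) ∂p)| := by
      rw [← Complex.ofReal_sub, Complex.norm_real, Real.norm_eq_abs]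
    rw [norm_mul, hc, hab]
    have hm := hmom (i+1) him
    rw [abs_sub_comm] at hm
    calc |t| ^ (i+1) / ((i+1).factorial : ℝ) * |(∫ x, x ^ (i+1) ∂q) - (∫ x, x ^ (i+1) ∂p)|
        ≤ |t| ^ (i+1) / ((i+1).factorial : ℝ) * γ :=
          mul_le_mul_of_nonneg_left hm (by positivity)
      _ = γ * (|t| ^ (i+1) / ((i+1).factorial : ℝ)) := mul_comm _ _
  -- key pointwise bound
  have key : ∀ t ∈ Ioc (0:ℝ) T, ‖ψq t - ψp t‖
      ≤ γ * ∑ i ∈ Finset.range d, t ^ (i + 1) / (i + 1).factorial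
        + 2 * Real.exp T * (t ^ (d + 1) / (d + 1).factorial) := by
    intro t ht
    have habs : |t| = t := abs_of_nonneg ht.1.le
    have e1 : ‖ψp t - Sp t‖ ≤ t ^ (d+1) / (d+1).factorial * Real.exp t :=
      char_taylor' p hp ht.1.le d
    have e2 : ‖ψq t - Sq t‖ ≤ t ^ (d+1) / (d+1).factorial * Real.exp t :=
      char_taylor' q hq ht.1.le d
    have e3 : ‖Sq t - Sp t‖ ≤ γ * ∑ i ∈ Finset.range d, t ^ (i + 1) / (i + 1).factorial := by
      have := hS t
      rw [habs] at this
      exact this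
    have e1' : ‖Sp t - ψp t‖ ≤ t ^ (d+1) / (d+1).factorial * Real.exp t := by
      rw [norm_sub_rev]; exact e1
    have hexpb : t ^ (d+1) / (d+1).factorial * Real.exp t
        ≤ Real.exp T * (t ^ (d+1) / (d+1).factorial) := by
      have h1 : Real.exp t ≤ Real.exp T := Real.exp_le_exp.2 ht.2
      have h2 : (0:ℝ) ≤ t ^ (d+1) / (d+1).factorial :=
        div_nonneg (pow_nonneg ht.1.le _) (Nat.cast_nonneg _)
      nlinarith [Real.exp_pos t]
    have hd1 : ψq t - ψp t = (ψq t - Sq t) + (Sq t - Sp t) + (Sp t - ψp t) := by ring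
    rw [hd1]
    refine ((norm_add_le _ _).trans (add_le_add_left (norm_add_le _ _) _)).trans ?_
    nlinarith [e2, e3, e1', hexpb]
  -- divide by t
  have hgh : ∀ t ∈ Ioc (0:ℝ) T, ‖ψq t - ψp t‖ / t ≤ h t := by
    intro t ht
    rw [div_le_iff₀ ht.1]
    have hht : h t * t = γ * ∑ i ∈ Finset.range d, t ^ (i+1) / (i + 1).factorial
        + 2 * Real.exp T * (t ^ (d+1) / (d + 1).factorial) := by
      rw [hh, add_mul, mul_assoc γ, Finset.sum_mul]
      congr 1
      · congr 1
        exact Finset.sum_congr rfl fun i _ => by ring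
      · ring
    rw [hht]
    exact key t ht
  -- continuity / measurability
  have hcont : ∀ (μ : Measure ℝ), IsProbabilityMeasure μ →
      Continuous fun t : ℝ => ∫ x, Complex.exp (t * x * Complex.I) ∂μ := by
    intro μ _
    refine continuous_of_dominated (bound := fun _ => (1:ℝ))
      (fun t => Continuous.aestronglyMeasurable (by fun_prop))
      (fun t => Filter.Eventually.of_forall fun x => ?_) (integrable_const 1)
      (Filter.Eventually.of_forall fun x => by fun_prop)
    rw [Complex.norm_exp]
    simp
  have hcq : Continuous ψq := hcont q inferInstance
  have hcp : Continuous ψp := hcont p inferInstance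
  have hgm : AEStronglyMeasurable (fun t => ‖ψq t - ψp t‖ / t)
      (volume.restrict (Ioc (0:ℝ) T)) :=
    (((hcq.sub hcp).norm.measurable).div measurable_id).aestronglyMeasurable
  have hhc : Continuous h := by
    exact (continuous_const.mul
        (continuous_finset_sum _ fun i _ => (continuous_pow i).div_const _)).add
      (continuous_const.mul ((continuous_pow d).div_const _))
  have hhI : IntegrableOn h (Ioc (0:ℝ) T) := hhc.integrableOn_Ioc
  have hgI : IntegrableOn (fun t => ‖ψq t - ψp t‖ / t) (Ioc (0:ℝ) T) := by
    refine Integrable.mono' hhI hgm ?_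
    refine (ae_restrict_mem measurableSet_Ioc).mono fun t ht => ?_
    rw [Real.norm_eq_abs, _root_.abs_of_nonneg (div_nonneg (norm_nonneg _) ht.1.le)]
    exact hgh t ht
  rw [intervalIntegral.integral_of_le hT0.le]
  have hpowint : ∀ (k : ℕ) (c : ℝ), (∫ t in (0:ℝ)..T, t ^ k / c)
      = T ^ (k+1) / (c * ((k:ℝ)+1)) := by
    intro k c
    rw [intervalIntegral.integral_div, integral_pow, zero_pow (Nat.succ_ne_zero k),
      sub_zero, div_div, mul_comm]
  calc (∫ t in Ioc (0:ℝ) T, ‖ψq t - ψp t‖ / t)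
      ≤ ∫ t in Ioc (0:ℝ) T, h t := setIntegral_mono_on hgI hhI measurableSet_Ioc hgh
    _ = ∫ t in (0:ℝ)..T, h t := (intervalIntegral.integral_of_le hT0.le).symm
    _ = γ * ∑ i ∈ Finset.range d, T ^ (i+1) / ((i + 1).factorial * ((i:ℝ)+1))
        + 2 * Real.exp T * (T ^ (d+1) / ((d + 1).factorial * ((d:ℝ)+1))) := by
      rw [hh]
      have c1 : Continuous fun t : ℝ => γ * ∑ i ∈ Finset.range d, t ^ i / ((i+1).factorial : ℝ) :=
        continuous_const.mul (continuous_finset_sum _ fun i _ => (continuous_pow i).div_const _)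
      have c2 : Continuous fun t : ℝ => 2 * Real.exp T * (t ^ d / ((d+1).factorial : ℝ)) :=
        continuous_const.mul ((continuous_pow d).div_const _)
      rw [intervalIntegral.integral_add (c1.intervalIntegrable _ _) (c2.intervalIntegrable _ _),
        intervalIntegral.integral_const_mul, intervalIntegral.integral_const_mul,
        intervalIntegral.integral_finset_sum
          (fun i _ => Continuous.intervalIntegrable ((continuous_pow i).div_const _) _ _)]
      simp only [hpowint]
    _ ≤ Real.exp T * (γ + T ^ (d + 1) / (d.factorial * d)) := by
      have hfin1 : ∑ i ∈ Finset.range d, T ^ (i+1) / ((i + 1).factorial * ((i:ℝ)+1))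
          ≤ Real.exp T - 1 := by
        have h1 : ∑ i ∈ Finset.range d, T ^ (i+1) / ((i + 1).factorial * ((i:ℝ)+1))
            ≤ ∑ i ∈ Finset.range d, T ^ (i+1) / ((i + 1).factorial : ℝ) := by
          refine Finset.sum_le_sum fun i _ => ?_
          have hf1 : (0:ℝ) < (i + 1).factorial := by exact_mod_cast (i+1).factorial_pos
          have hi1 : (0:ℝ) ≤ (i:ℝ) := Nat.cast_nonneg i
          rw [div_le_div_iff₀ (by nlinarith) hf1]
          nlinarith [mul_nonneg (mul_nonneg (pow_nonneg hT0.le (i+1)) hf1.le) hi1]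
        have h2 : ∑ i ∈ Finset.range d, T ^ (i+1) / ((i + 1).factorial : ℝ)
            = (∑ m ∈ Finset.range (d+1), T ^ m / m.factorial) - 1 := by
          rw [Finset.sum_range_succ']
          simp
        have h3 := Real.sum_le_exp_of_nonneg hT0.le (d+1)
        linarith
      have hfin2 : T ^ (d+1) / ((d + 1).factorial * ((d:ℝ)+1)) * 2
          ≤ T ^ (d+1) / (d.factorial * d) := by
        have hfac : ((d+1).factorial : ℝ) = ((d:ℝ)+1) * d.factorial := by
          rw [Nat.factorial_succ]; push_cast; ring
        rw [hfac, div_mul_eq_mul_div,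
          div_le_div_iff₀ (by positivity)
            (mul_pos ((Nat.cast_pos (α := ℝ)).2 d.factorial_pos) hd0)]
        have hdd : (2:ℝ) * d ≤ ((d:ℝ)+1) * ((d:ℝ)+1) := by nlinarith
        nlinarith [pow_pos hT0 (d+1), (Nat.cast_pos (α := ℝ)).2 d.factorial_pos,
          mul_nonneg (mul_nonneg (pow_nonneg hT0.le (d+1)) ((Nat.cast_pos (α := ℝ)).2 d.factorial_pos).le) hd0.le]
      have h4 : γ * ∑ i ∈ Finset.range d, T ^ (i+1) / ((i + 1).factorial * ((i:ℝ)+1))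
          ≤ γ * (Real.exp T - 1) := mul_le_mul_of_nonneg_left hfin1 hγ
      have h5 : Real.exp T * (T ^ (d+1) / ((d + 1).factorial * ((d:ℝ)+1)) * 2)
          ≤ Real.exp T * (T ^ (d+1) / (d.factorial * d)) :=
        mul_le_mul_of_nonneg_left hfin2 (Real.exp_pos T).le
      nlinarith [h4, h5, hγ, Real.exp_pos T]
end

section
/- Let S₁ = (s¹_{ij}) and S₂ = (s²_{ij}) be two symmetric k×k matrices with entries in [0,1], and define H(S) = Σ_{i<j} h(s_{ij}) where h is binary entropy. Set α = ‖S₁ − S₂‖₁/(4k²) where ‖S₁−S₂‖₁ = Σ_{i<j}|s¹_{ij} − s²_{ij}|, and assume 0 < α < 1/2. Then H(S₂) − H(S₁) ≤ 5k² h(α). -/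
open Real Finset


lemma piece_aux (d a : ℝ) (hd : 0 ≤ d) (ha : 0 < a) :
    d * log a - d * log d ≤ a - d := by
  rcases hd.eq_or_lt with h | h
  · simp [← h]; linarith
  · have h1 : log (a / d) ≤ a / d - 1 := Real.log_le_sub_one_of_pos (div_pos ha h)
    rw [Real.log_div ha.ne' h.ne'] at h1
    have := mul_le_mul_of_nonneg_left h1 h.le
    calc d * log a - d * log d = d * (log a - log d) := by ring
    _ ≤ d * (a / d - 1) := this
    _ = a - d := by field_simp

lemma gibbs_aux (d a : ℝ) (hd0 : 0 ≤ d) (hd1 : d ≤ 1) (ha0 : 0 < a) (ha1 : a < 1) :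
    Real.binEntropy d ≤ -(d * log a) - (1 - d) * log (1 - a) := by
  have h1 := piece_aux d a hd0 ha0
  have h2 := piece_aux (1 - d) (1 - a) (by linarith) (by linarith)
  rw [Real.binEntropy, Real.log_inv, Real.log_inv]
  nlinarith

lemma subadd_aux (x d : ℝ) (hx : 0 ≤ x) (hd : 0 ≤ d) (h1 : x + d ≤ 1) :
    Real.binEntropy (x + d) ≤ Real.binEntropy x + Real.binEntropy d := by
  have C := Real.strictConcave_binEntropy.concaveOn
  rcases eq_or_lt_of_le (by linarith : (0:ℝ) ≤ x + d) with hs | hs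
  · have hx0 : x = 0 := by linarith
    have hd0 : d = 0 := by linarith
    simp [hx0, hd0]
  · set s := x + d with hsdef
    have hsIcc : s ∈ Set.Icc (0:ℝ) 1 := ⟨hs.le, h1⟩
    have h0Icc : (0:ℝ) ∈ Set.Icc (0:ℝ) 1 := by norm_num
    have hA := C.2 h0Icc hsIcc (div_nonneg hd hs.le) (div_nonneg hx hs.le)
      (by field_simp; try (rw [hsdef]; ring))
    have hB := C.2 h0Icc hsIcc (div_nonneg hx hs.le) (div_nonneg hd hs.le)
      (by field_simp; exact hsdef.symm)
    simp only [smul_eq_mul, mul_zero, zero_add, Real.binEntropy_zero, mul_zero] at hA hB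
    rw [div_mul_cancel₀ _ hs.ne'] at hA hB
    have hAB := add_le_add hA hB
    have : x / s * Real.binEntropy s + d / s * Real.binEntropy s = Real.binEntropy s := by
      field_simp
      rw [hsdef]; ring
    linarith

lemma diff_le_aux (x y : ℝ) (hx : x ∈ Set.Icc (0:ℝ) 1) (hy : y ∈ Set.Icc (0:ℝ) 1) :
    Real.binEntropy y - Real.binEntropy x ≤ Real.binEntropy |y - x| := by
  obtain ⟨hx0, hx1⟩ := hx
  obtain ⟨hy0, hy1⟩ := hy
  rcases le_total x y with h | h
  · rw [abs_of_nonneg (by linarith)]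
    have := subadd_aux x (y - x) hx0 (by linarith) (by linarith)
    rw [show x + (y - x) = y by ring] at this
    linarith
  · rw [abs_of_nonpos (by linarith), neg_sub]
    have := subadd_aux (1 - x) (x - y) (by linarith) (by linarith) (by linarith)
    rw [show 1 - x + (x - y) = 1 - y by ring, Real.binEntropy_one_sub,
      Real.binEntropy_one_sub] at this
    linarith

/-- Continuity of the entropy of a Szemerédi type: if `S₁, S₂` are symmetric `k × k`
matrices with entries in `[0,1]`, `‖S₁ − S₂‖₁` is the sum of entrywise distances over
pairs `i < j`, and `α = ‖S₁ − S₂‖₁/(4k²) ∈ (0, 1/2)`, then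
`H(S₂) − H(S₁) ≤ 5 k² h(α)`. -/
theorem entropy_diff_le_of_L1_close (k : ℕ) (S₁ S₂ : Fin k → Fin k → ℝ)
    (hsym₁ : ∀ i j, S₁ i j = S₁ j i) (hsym₂ : ∀ i j, S₂ i j = S₂ j i)
    (hmem₁ : ∀ i j, S₁ i j ∈ Set.Icc (0:ℝ) 1)
    (hmem₂ : ∀ i j, S₂ i j ∈ Set.Icc (0:ℝ) 1)
    (α : ℝ)
    (hαdef : α = (∑ p ∈ Finset.univ.filter (fun p : Fin k × Fin k => p.1 < p.2),
        |S₁ p.1 p.2 - S₂ p.1 p.2|) / (4 * k ^ 2))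
    (hα₀ : 0 < α) (hα₁ : α < 1 / 2) :
    (∑ p ∈ Finset.univ.filter (fun p : Fin k × Fin k => p.1 < p.2),
        Real.binEntropy (S₂ p.1 p.2))
      - (∑ p ∈ Finset.univ.filter (fun p : Fin k × Fin k => p.1 < p.2),
          Real.binEntropy (S₁ p.1 p.2))
      ≤ 5 * k ^ 2 * Real.binEntropy α := by
  classical
  have hk : k ≠ 0 := by
    rintro rfl
    norm_num [Finset.filter_eq_empty_iff] at hαdef
    · exact absurd hαdef (by rintro rfl; linarith)
  set T : Finset (Fin k × Fin k) := Finset.univ.filter (fun p : Fin k × Fin k => p.1 < p.2)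
    with hT
  set d : Fin k × Fin k → ℝ := fun p => |S₁ p.1 p.2 - S₂ p.1 p.2| with hd
  set D : ℝ := ∑ p ∈ T, d p with hDdef
  set K : ℝ := (k : ℝ) ^ 2 with hKdef
  set Lα : ℝ := Real.log α with hLαdef
  set L1 : ℝ := Real.log (1 - α) with hL1def
  set A : ℝ := Real.binEntropy α with hAdef'
  have hK : 0 < K := by
    rw [hKdef]
    exact pow_pos (by exact_mod_cast Nat.pos_of_ne_zero hk) 2
  -- d p ∈ [0,1]
  have hd0 : ∀ p : Fin k × Fin k, 0 ≤ d p := fun p => abs_nonneg _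
  have hd1 : ∀ p : Fin k × Fin k, d p ≤ 1 := by
    intro p
    have h1 := hmem₁ p.1 p.2
    have h2 := hmem₂ p.1 p.2
    rw [hd]
    exact abs_le.2 ⟨by simp at h1 h2 ⊢; linarith, by simp at h1 h2 ⊢; linarith⟩
  -- per-entry bound
  have hper : ∀ p ∈ T, Real.binEntropy (S₂ p.1 p.2) - Real.binEntropy (S₁ p.1 p.2)
      ≤ -(d p * Lα) - (1 - d p) * L1 := by
    intro p _
    have h1 := diff_le_aux (S₁ p.1 p.2) (S₂ p.1 p.2) (hmem₁ p.1 p.2) (hmem₂ p.1 p.2)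
    rw [abs_sub_comm] at h1
    have h2 := gibbs_aux (d p) α (hd0 p) (hd1 p) hα₀ (by linarith)
    exact h1.trans h2
  -- sum the per-entry bounds
  have hsum : (∑ p ∈ T, Real.binEntropy (S₂ p.1 p.2))
      - (∑ p ∈ T, Real.binEntropy (S₁ p.1 p.2))
      ≤ -(D * Lα) - ((T.card : ℝ) - D) * L1 := by
    rw [← Finset.sum_sub_distrib]
    calc (∑ p ∈ T, (Real.binEntropy (S₂ p.1 p.2) - Real.binEntropy (S₁ p.1 p.2)))
        ≤ ∑ p ∈ T, (-(d p * Lα) - (1 - d p) * L1) := Finset.sum_le_sum hper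
      _ = ∑ p ∈ T, ((L1 - Lα) * d p + (-L1)) := by
          refine Finset.sum_congr rfl fun p _ => by ring
      _ = (L1 - Lα) * D + (T.card : ℝ) * (-L1) := by
          rw [Finset.sum_add_distrib, ← Finset.mul_sum, Finset.sum_const, nsmul_eq_mul, hDdef]
      _ = -(D * Lα) - ((T.card : ℝ) - D) * L1 := by ring
  -- card bound : 2 * T.card ≤ k ^ 2
  have hcardN : 2 * T.card ≤ k ^ 2 := by
    have himg : (Finset.univ.filter (fun p : Fin k × Fin k => p.2 < p.1)) = T.image Prod.swap := by
      ext p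
      simp only [Finset.mem_image, hT, Finset.mem_filter, Finset.mem_univ, true_and]
      constructor
      · intro hp; exact ⟨p.swap, hp, Prod.swap_swap p⟩
      · rintro ⟨q, hq, rfl⟩; simpa using hq
    have hdis : Disjoint T (Finset.univ.filter (fun p : Fin k × Fin k => p.2 < p.1)) := by
      rw [Finset.disjoint_left]
      intro p hp hp'
      rw [hT, Finset.mem_filter] at hp
      rw [Finset.mem_filter] at hp'
      exact absurd hp'.2 (not_lt.2 hp.2.le)
    calc 2 * T.card
        = T.card + (Finset.univ.filter (fun p : Fin k × Fin k => p.2 < p.1)).card := by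
          rw [himg, Finset.card_image_of_injective _ Prod.swap_injective]; ring
      _ = (T ∪ Finset.univ.filter (fun p : Fin k × Fin k => p.2 < p.1)).card :=
          (Finset.card_union_of_disjoint hdis).symm
      _ ≤ (Finset.univ : Finset (Fin k × Fin k)).card := Finset.card_le_card (Finset.subset_univ _)
      _ = k ^ 2 := by simp [Finset.card_univ, sq]
  have hNK : 2 * (T.card : ℝ) ≤ K := by
    rw [hKdef]; exact_mod_cast hcardN
  -- D facts
  have hDα : D = α * (4 * K) := by
    have h4 : (4:ℝ) * K ≠ 0 := by positivity
    rw [hαdef, div_mul_cancel₀ _ h4]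
  have hD0 : 0 ≤ D := Finset.sum_nonneg fun p _ => hd0 p
  have hDN : D ≤ (T.card : ℝ) := by
    have := Finset.sum_le_card_nsmul T d 1 (fun p _ => hd1 p)
    rw [nsmul_eq_mul, mul_one] at this
    exact this
  -- log facts
  have hLα : Lα < 0 := Real.log_neg hα₀ (by linarith)
  have hL1 : L1 < 0 := Real.log_neg (by linarith) (by linarith)
  have hAeq : A = -(α * Lα) - (1 - α) * L1 := by
    rw [hAdef', Real.binEntropy, Real.log_inv, Real.log_inv, hLαdef, hL1def]; ring
  have hA0 : 0 ≤ A := Real.binEntropy_nonneg hα₀.le (by linarith)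
  -- final arithmetic
  have e1 : -(D * Lα) = 4 * K * A + 4 * K * (1 - α) * L1 := by
    rw [hDα, hAeq]; ring
  have e2 : ((T.card : ℝ) - D) * (-L1) ≤ (K / 2) * (-L1) := by
    apply mul_le_mul_of_nonneg_right (by linarith) (by linarith)
  have e3 : (K / 2) * (-L1) ≤ K * A := by
    have h1 : (1 / 2 : ℝ) * (-L1) ≤ A := by
      nlinarith [mul_nonneg hα₀.le (neg_nonneg.2 hLα.le),
        mul_le_mul_of_nonneg_right (show (1:ℝ)/2 ≤ 1 - α by linarith) (neg_nonneg.2 hL1.le)]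
    nlinarith [mul_le_mul_of_nonneg_left h1 hK.le]
  have e4 : 4 * K * (1 - α) * L1 ≤ 0 := by nlinarith
  calc (∑ p ∈ T, Real.binEntropy (S₂ p.1 p.2)) - (∑ p ∈ T, Real.binEntropy (S₁ p.1 p.2))
      ≤ -(D * Lα) - ((T.card : ℝ) - D) * L1 := hsum
    _ ≤ 5 * K * A := by nlinarith [e1, e2, e3, e4]
    _ = 5 * (k:ℝ) ^ 2 * Real.binEntropy α := by rw [hKdef, hAdef']
end

section
/- Let S be a symmetric k×k matrix with entries in [0,1] representing a random graph with independent edge probabilities s_{ij}, and let t(S, K_r) = (1/C(k,r)) Σ_{A⊆[k], |A|=r} Π_{i<j∈A} s_{ij} be the mean K_r-clique density. Then for any φ' ∈ [0,1] with φ' ≥ t(S,K_r) =: φ, there exists α ∈ [0,1] with α ≤ ((φ'−φ)/(1−φ))^{1/C(r,2)} such that the matrix S̄ = S + α(1−S) (entrywise, i.e. s̄_{ij} = s_{ij} + α(1−s_{ij})) satisfies t(S̄, K_r) = φ'. -/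
open Finset

/-- The mean `K_r`-clique density of a `k × k` edge-probability matrix `S`. -/
noncomputable def cliqueDensity (k r : ℕ) (S : Fin k → Fin k → ℝ) : ℝ :=
  ((k.choose r : ℝ))⁻¹ *
    ∑ A ∈ Finset.powersetCard r (Finset.univ : Finset (Fin k)),
      ∏ p ∈ (A ×ˢ A).filter (fun p : Fin k × Fin k => p.1 < p.2), S p.1 p.2

lemma prod_interp_ge {ι : Type*} (E : Finset ι) (x : ι → ℝ) (α : ℝ)
    (hx : ∀ e ∈ E, x e ∈ Set.Icc (0:ℝ) 1) (hα : α ∈ Set.Icc (0:ℝ) 1) :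
    (∏ e ∈ E, x e) + α ^ E.card * (1 - ∏ e ∈ E, x e) ≤
      ∏ e ∈ E, (x e + α * (1 - x e)) := by
  obtain ⟨hα0, hα1⟩ := hα
  induction E using Finset.cons_induction with
  | empty => simp
  | cons a E ha ih =>
    have hxa := hx a (mem_cons_self a E)
    have hx' : ∀ e ∈ E, x e ∈ Set.Icc (0:ℝ) 1 := fun e he => hx e (mem_cons.2 (Or.inr he))
    have ih' := ih hx'
    set p := ∏ e ∈ E, x e with hp
    have hp0 : 0 ≤ p := Finset.prod_nonneg fun e he => (hx' e he).1
    have hp1 : p ≤ 1 := Finset.prod_le_one (fun e he => (hx' e he).1) (fun e he => (hx' e he).2)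
    rw [Finset.prod_cons, Finset.prod_cons, Finset.card_cons]
    have h1 : 0 ≤ x a + α * (1 - x a) := by nlinarith [hxa.1, hxa.2]
    calc x a * p + α ^ (E.card + 1) * (1 - x a * p)
        ≤ (x a + α * (1 - x a)) * (p + α ^ E.card * (1 - p)) := by
          have hps : α ^ (E.card + 1) = α ^ E.card * α := pow_succ α E.card
          have hpow1 : α ^ (E.card + 1) ≤ α ^ E.card := pow_le_pow_of_le_one hα0 hα1 (by omega)
          have hpow2 : α ^ (E.card + 1) ≤ α := by
            calc α ^ (E.card + 1) ≤ α ^ 1 := pow_le_pow_of_le_one hα0 hα1 (by omega)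
            _ = α := pow_one α
          have hu0 : 0 ≤ α ^ E.card := pow_nonneg hα0 _
          have hu1 : α ^ E.card ≤ 1 := pow_le_one₀ hα0 hα1
          rw [hps]
          nlinarith [mul_nonneg (mul_nonneg hxa.1 (by linarith : (0:ℝ) ≤ 1 - p)) (mul_nonneg hu0 (by linarith : (0:ℝ) ≤ 1 - α)),
            mul_nonneg (mul_nonneg (by linarith [hxa.2] : (0:ℝ) ≤ 1 - x a) hp0) (mul_nonneg hα0 (by linarith : (0:ℝ) ≤ 1 - α ^ E.card))]
      _ ≤ (x a + α * (1 - x a)) * ∏ e ∈ E, (x e + α * (1 - x e)) :=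
          mul_le_mul_of_nonneg_left ih' h1

lemma card_pairs_le {k : ℕ} (A : Finset (Fin k)) :
    ((A ×ˢ A).filter (fun p : Fin k × Fin k => p.1 < p.2)).card ≤ A.card.choose 2 := by
  rw [← Finset.card_powersetCard 2 A]
  apply Finset.card_le_card_of_injOn (fun p => ({p.1, p.2} : Finset (Fin k)))
  · intro p hp
    simp only [coe_filter, Set.mem_setOf_eq, mem_filter, mem_product, Finset.mem_coe] at hp ⊢
    rw [Finset.mem_powersetCard]
    constructor
    · intro x hx
      rcases Finset.mem_insert.1 hx with h | h
      · exact h ▸ hp.1.1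
      · exact (Finset.mem_singleton.1 h) ▸ hp.1.2
    · exact Finset.card_pair hp.2.ne
  · intro p hp q hq h
    simp only [coe_filter, Set.mem_setOf_eq, mem_product] at hp hq
    simp only at h
    have h1 : p.1 ∈ ({q.1, q.2} : Finset (Fin k)) := h ▸ (by simp)
    have h2 : p.2 ∈ ({q.1, q.2} : Finset (Fin k)) := h ▸ (by simp)
    have h3 : q.1 ∈ ({p.1, p.2} : Finset (Fin k)) := h ▸ (by simp)
    simp only [Finset.mem_insert, Finset.mem_singleton] at h1 h2 h3
    rcases h1 with h1 | h1
    · rcases h2 with h2 | h2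
      · exact absurd (h1 ▸ h2 ▸ hp.2) (lt_irrefl _)
      · exact Prod.ext h1 h2
    · exfalso
      rcases h3 with h3 | h3
      · exact absurd (h1 ▸ h3 ▸ hq.2) (lt_irrefl _)
      · have hlt : p.2 < p.1 := by rw [← h3, h1]; exact hq.2
        exact absurd hp.2 (lt_asymm hlt)

lemma density_lower (k r : ℕ) (hk : r ≤ k) (S : Fin k → Fin k → ℝ)
    (hmem : ∀ i j, S i j ∈ Set.Icc (0:ℝ) 1) (α : ℝ) (hα : α ∈ Set.Icc (0:ℝ) 1) :
    cliqueDensity k r S + α ^ (r.choose 2) * (1 - cliqueDensity k r S) ≤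
      cliqueDensity k r (fun i j => S i j + α * (1 - S i j)) := by
  unfold cliqueDensity
  set T := Finset.powersetCard r (Finset.univ : Finset (Fin k)) with hT
  set N : ℝ := (k.choose r : ℝ) with hNdef
  have hN : (0:ℝ) < N := by
    simpa [hNdef] using (Nat.cast_pos.2 (Nat.choose_pos hk) : (0:ℝ) < k.choose r)
  have hcN : N⁻¹ * N = 1 := inv_mul_cancel₀ hN.ne'
  set q := r.choose 2 with hq
  set pA := fun A : Finset (Fin k) =>
    ∏ p ∈ (A ×ˢ A).filter (fun p : Fin k × Fin k => p.1 < p.2), S p.1 p.2 with hpA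
  have key : ∑ A ∈ T, pA A + α ^ q * (N - ∑ A ∈ T, pA A) ≤
      ∑ A ∈ T, ∏ p ∈ (A ×ˢ A).filter (fun p : Fin k × Fin k => p.1 < p.2),
        (S p.1 p.2 + α * (1 - S p.1 p.2)) := by
    have hNcard : ((T.card : ℝ)) = N := by
      rw [hT, Finset.card_powersetCard, Finset.card_univ, Fintype.card_fin]
    calc ∑ A ∈ T, pA A + α ^ q * (N - ∑ A ∈ T, pA A)
        = ∑ A ∈ T, (pA A + α ^ q * (1 - pA A)) := by
          rw [Finset.sum_add_distrib, ← Finset.mul_sum, Finset.sum_sub_distrib,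
            Finset.sum_const, nsmul_eq_mul, mul_one, hNcard]
      _ ≤ _ := by
          apply Finset.sum_le_sum
          intro A hA
          have hAcard : A.card = r := (Finset.mem_powersetCard.1 hA).2
          have hE : ∀ e ∈ (A ×ˢ A).filter (fun p : Fin k × Fin k => p.1 < p.2),
              (fun p : Fin k × Fin k => S p.1 p.2) e ∈ Set.Icc (0:ℝ) 1 :=
            fun e _ => hmem e.1 e.2
          have hle := prod_interp_ge _ (fun p : Fin k × Fin k => S p.1 p.2) α hE hα
          have hcard : ((A ×ˢ A).filter (fun p : Fin k × Fin k => p.1 < p.2)).card ≤ q := by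
            rw [hq, ← hAcard]; exact card_pairs_le A
          have hp1 : pA A ≤ 1 :=
            Finset.prod_le_one (fun e _ => (hmem e.1 e.2).1) (fun e _ => (hmem e.1 e.2).2)
          have hpow : α ^ q ≤ α ^ ((A ×ˢ A).filter (fun p : Fin k × Fin k => p.1 < p.2)).card :=
            pow_le_pow_of_le_one hα.1 hα.2 hcard
          have h1p : (0:ℝ) ≤ 1 - pA A := by linarith
          calc pA A + α ^ q * (1 - pA A)
              ≤ pA A + α ^ ((A ×ˢ A).filter (fun p : Fin k × Fin k => p.1 < p.2)).card * (1 - pA A) := by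
                have := mul_le_mul_of_nonneg_right hpow h1p
                linarith
            _ ≤ _ := hle
  calc N⁻¹ * ∑ A ∈ T, pA A + α ^ q * (1 - N⁻¹ * ∑ A ∈ T, pA A)
      = N⁻¹ * (∑ A ∈ T, pA A + α ^ q * (N - ∑ A ∈ T, pA A)) := by
        rw [← hcN]; ring
    _ ≤ _ := mul_le_mul_of_nonneg_left key (inv_pos.2 hN).le

/-- Given a symmetric matrix `S` with entries in `[0,1]` and clique density `φ`, for any
target density `φ' ∈ [0,1]` with `φ' ≥ φ`, there is `α ∈ [0,1]` with
`α ≤ ((φ'−φ)/(1−φ))^{1/C(r,2)}` such that the interpolated matrix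
`S̄ = S + α(1−S)` has clique density exactly `φ'`. -/
theorem exists_interpolation_to_density (k r : ℕ) (hr : 2 ≤ r) (hk : r ≤ k)
    (S : Fin k → Fin k → ℝ)
    (hsym : ∀ i j, S i j = S j i)
    (hmem : ∀ i j, S i j ∈ Set.Icc (0:ℝ) 1)
    (φ φ' : ℝ) (hφ : φ = cliqueDensity k r S)
    (hφ' : φ' ∈ Set.Icc (0:ℝ) 1) (hle : φ ≤ φ') :
    ∃ α ∈ Set.Icc (0:ℝ) 1,
      α ≤ ((φ' - φ) / (1 - φ)) ^ ((1 : ℝ) / (r.choose 2)) ∧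
      cliqueDensity k r (fun i j => S i j + α * (1 - S i j)) = φ' := by
  set q := r.choose 2 with hq
  have hqpos : 0 < q := Nat.choose_pos hr
  have hqR : ((q:ℝ)) ≠ 0 := Nat.cast_ne_zero.2 hqpos.ne'
  set f : ℝ → ℝ := fun α => cliqueDensity k r (fun i j => S i j + α * (1 - S i j)) with hf
  have hf0 : f 0 = φ := by
    have : (fun i j => S i j + (0:ℝ) * (1 - S i j)) = S := by funext i j; ring
    rw [hf, hφ]; simp only [this]
  have hcont : Continuous f := by
    rw [hf]
    unfold cliqueDensity
    refine Continuous.mul continuous_const ?_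
    apply continuous_finset_sum
    intro A _
    apply continuous_finset_prod
    intro p _
    continuity
  rcases eq_or_lt_of_le hle with heq | hlt
  · refine ⟨0, ⟨le_refl 0, zero_le_one⟩, ?_, ?_⟩
    · exact Real.rpow_nonneg (by rw [← heq]; simp) _
    · exact heq ▸ hf0
  · have hφ1 : φ < 1 := lt_of_lt_of_le hlt hφ'.2
    set x : ℝ := (φ' - φ) / (1 - φ) with hx
    have hx0 : 0 ≤ x := div_nonneg (by linarith) (by linarith)
    have hx1 : x ≤ 1 := (div_le_one (by linarith)).2 (by linarith [hφ'.2])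
    set β : ℝ := x ^ ((1:ℝ) / q) with hβ
    have hβ0 : 0 ≤ β := Real.rpow_nonneg hx0 _
    have hβ1 : β ≤ 1 := Real.rpow_le_one hx0 hx1 (by positivity)
    have hβq : β ^ q = x := by
      rw [hβ, ← Real.rpow_natCast (x ^ ((1:ℝ)/q)) q, ← Real.rpow_mul hx0,
        one_div, inv_mul_cancel₀ hqR, Real.rpow_one]
    have hfβ : φ' ≤ f β := by
      have := density_lower k r hk S hmem β ⟨hβ0, hβ1⟩
      rw [← hφ, ← hq, hβq] at this
      have hxv : x * (1 - φ) = φ' - φ := div_mul_cancel₀ _ (by linarith : (1:ℝ) - φ ≠ 0)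
      have this2 : φ + x * (1 - φ) ≤ f β := this
      linarith
    have hsub := intermediate_value_Icc hβ0 hcont.continuousOn
    have hmemφ' : φ' ∈ Set.Icc (f 0) (f β) := ⟨hf0 ▸ hle, hfβ⟩
    obtain ⟨α, hαmem, hαval⟩ := hsub hmemφ'
    exact ⟨α, ⟨hαmem.1, le_trans hαmem.2 hβ1⟩, hαmem.2, hαval⟩
end

section
/- For real numbers s₁,…,s_N ∈ [0,1] and α ∈ [0,1], Π_{ℓ=1}^N (s_ℓ + α(1−s_ℓ)) ≥ Π_{ℓ=1}^N s_ℓ + α^N (1 − Π_{ℓ=1}^N s_ℓ). -/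
open Finset

/-- Product-mixing inequality: for `s_ℓ ∈ [0,1]` and `α ∈ [0,1]`,
`Π (s_ℓ + α(1−s_ℓ)) ≥ Π s_ℓ + α^N (1 − Π s_ℓ)`. -/
theorem prod_mix_ge (N : ℕ) (s : Fin N → ℝ)
    (hs : ∀ ℓ, s ℓ ∈ Set.Icc (0:ℝ) 1) (α : ℝ) (hα : α ∈ Set.Icc (0:ℝ) 1) :
    (∏ ℓ, s ℓ) + α ^ N * (1 - ∏ ℓ, s ℓ) ≤ ∏ ℓ, (s ℓ + α * (1 - s ℓ)) := by
  induction N with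
  | zero => simp
  | succ n ih =>
    rw [Fin.prod_univ_succ, Fin.prod_univ_succ]
    have h0 := hs 0
    have hQs : ∀ ℓ : Fin n, s ℓ.succ ∈ Set.Icc (0:ℝ) 1 := fun ℓ => hs ℓ.succ
    have hT : (∏ ℓ : Fin n, s ℓ.succ) + α ^ n * (1 - ∏ ℓ : Fin n, s ℓ.succ)
        ≤ ∏ ℓ : Fin n, (s ℓ.succ + α * (1 - s ℓ.succ)) := ih (fun ℓ => s ℓ.succ) hQs
    set Q := ∏ ℓ : Fin n, s ℓ.succ with hQdef
    have hQ0 : 0 ≤ Q := Finset.prod_nonneg fun ℓ _ => (hQs ℓ).1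
    have hQ1 : Q ≤ 1 := Finset.prod_le_one (fun ℓ _ => (hQs ℓ).1) (fun ℓ _ => (hQs ℓ).2)
    have hαn : 0 ≤ α ^ n := pow_nonneg hα.1 n
    have hαn1 : α ^ n ≤ 1 := pow_le_one₀ hα.1 hα.2
    have hpos : 0 ≤ s 0 + α * (1 - s 0) := by nlinarith [h0.1, h0.2, hα.1, hα.2]
    calc s 0 * Q + α ^ (n+1) * (1 - s 0 * Q)
        ≤ (s 0 + α * (1 - s 0)) * (Q + α ^ n * (1 - Q)) := by
          have key : (s 0 + α * (1 - s 0)) * (Q + α ^ n * (1 - Q))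
              - (s 0 * Q + α ^ (n+1) * (1 - s 0 * Q))
              = s 0 * (1 - Q) * (α ^ n * (1 - α)) + (1 - s 0) * Q * (α * (1 - α ^ n)) := by
            ring
          nlinarith [mul_nonneg (mul_nonneg h0.1 (sub_nonneg.2 hQ1))
              (mul_nonneg hαn (sub_nonneg.2 hα.2)),
            mul_nonneg (mul_nonneg (sub_nonneg.2 h0.2) hQ0)
              (mul_nonneg hα.1 (sub_nonneg.2 hαn1))]
      _ ≤ (s 0 + α * (1 - s 0)) * ∏ ℓ : Fin n, (s ℓ.succ + α * (1 - s ℓ.succ)) :=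
          mul_le_mul_of_nonneg_left hT hpos
end

section
/- Consider a random bipartite graph G = (V₁, V₂) with |V₁| = |V₂| = g, where each of the g² possible edges is present independently with probability s ∈ [0,1]. The probability that G is not ε-uniform (i.e., that there exist A ⊆ V₁, B ⊆ V₂ with |A|, |B| ≥ εg and |e(A,B)/(|A||B|) − s| > ε) is at most 2^{−2ε⁴g² + 2g + 2 log₂ g + 1}. -/
open MeasureTheory Finset

noncomputable def W {I : Type*} [Fintype I] (s : ℝ) (ω : I → Bool) : ℝ :=
  ∏ i, (if ω i then s else 1 - s)

lemma W_nonneg {I : Type*} [Fintype I] {s : ℝ} (hs0 : 0 ≤ s) (hs1 : s ≤ 1)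
    (ω : I → Bool) : 0 ≤ W s ω :=
  Finset.prod_nonneg fun i _ => by by_cases hb : ω i <;> simp [hb] <;> linarith

def Xf {I : Type*} (J : Finset I) (ω : I → Bool) : ℝ :=
  ∑ i ∈ J, if ω i then 1 else 0

lemma measure_pi_bool {I : Type*} [Fintype I] [DecidableEq I] (s : ℝ) (hs0 : 0 ≤ s) (hs1 : s ≤ 1)
    (h : Real.toNNReal s ≤ 1) (P : (I → Bool) → Prop) [DecidablePred P] :
    (Measure.pi (fun _ : I => (PMF.bernoulli (Real.toNNReal s) h).toMeasure)) {ω | P ω}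
      = ENNReal.ofReal (∑ ω ∈ Finset.univ.filter P, W s ω) := by
  classical
  have hsingle : ∀ ω : I → Bool,
      (Measure.pi (fun _ : I => (PMF.bernoulli (Real.toNNReal s) h).toMeasure)) {ω}
        = ENNReal.ofReal (W s ω) := by
    intro ω
    rw [← Set.univ_pi_singleton ω, Measure.pi_pi]
    rw [W, ENNReal.ofReal_prod_of_nonneg
      (fun i _ => by by_cases hb : ω i <;> simp [hb] <;> linarith)]
    refine Finset.prod_congr rfl fun i _ => ?_
    rw [PMF.toMeasure_apply_singleton _ _ (measurableSet_singleton _),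
      PMF.bernoulli_apply]
    cases hb : ω i
    · simp only [Bool.cond_false, hb, if_false]
      change 1 - ENNReal.ofReal s = ENNReal.ofReal (1 - s)
      rw [← ENNReal.ofReal_one, ← ENNReal.ofReal_sub _ hs0]
    · simp [hb]; rfl
  have hS : {ω | P ω} = ⋃ ω ∈ Finset.univ.filter P, ({ω} : Set (I → Bool)) := by
    ext x; simp
  rw [hS, measure_biUnion_finset ?_ (fun _ _ => measurableSet_singleton _)]
  · rw [ENNReal.ofReal_sum_of_nonneg (fun ω _ => W_nonneg hs0 hs1 ω)]
    exact Finset.sum_congr rfl fun ω _ => hsingle ω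
  · intro x _ y _ hxy
    simp [Set.disjoint_singleton, hxy]

lemma hoeffding_mgf (s : ℝ) (hs0 : 0 ≤ s) (hs1 : s ≤ 1) (x : ℝ) :
    1 - s + s * Real.exp x ≤ Real.exp (s * x + x ^ 2 / 8) := by
  rcases eq_or_lt_of_le hs0 with h0 | h0
  · simp only [← h0, sub_zero, zero_mul, add_zero, zero_add]
    exact Real.one_le_exp (by positivity)
  rcases eq_or_lt_of_le hs1 with h1 | h1
  · subst h1
    simp only [sub_self, zero_add, one_mul]
    exact Real.exp_le_exp.2 (by nlinarith [sq_nonneg x])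
  set D : ℝ → ℝ := fun y => 1 - s + s * Real.exp y with hD
  have hDpos : ∀ y, 0 < D y := fun y => by
    have := Real.exp_pos y; simp only [hD]; nlinarith
  set F : ℝ → ℝ := fun y => s * y + y ^ 2 / 8 - Real.log (D y) with hF
  set F' : ℝ → ℝ := fun y => s + y / 4 - s * Real.exp y / D y with hF'
  set F'' : ℝ → ℝ := fun y =>
    1 / 4 - (s * Real.exp y * D y - s * Real.exp y * (s * Real.exp y)) / (D y) ^ 2 with hF''
  have hDd : ∀ y, HasDerivAt D (s * Real.exp y) y := fun y => by
    exact ((Real.hasDerivAt_exp y).const_mul s).const_add (1 - s)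
  have hFd : ∀ y, HasDerivAt F (F' y) y := fun y => by
    have hlog : HasDerivAt (fun y => Real.log (D y)) (s * Real.exp y / D y) y :=
      (hDd y).log (hDpos y).ne'
    have h2 : HasDerivAt (fun y => s * y + y ^ 2 / 8) (s + y / 4) y := by
      have ha : HasDerivAt (fun y : ℝ => s * y) s y := by
        simpa using (hasDerivAt_id y).const_mul s
      have hb : HasDerivAt (fun y : ℝ => y ^ 2 / 8) (y / 4) y := by
        have := (hasDerivAt_pow 2 y).div_const 8
        exact this.congr_deriv (by ring)
      exact ha.add hb
    exact h2.sub hlog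
  have hF'd : ∀ y, HasDerivAt F' (F'' y) y := fun y => by
    have hq : HasDerivAt (fun y => s * Real.exp y / D y)
        ((s * Real.exp y * D y - s * Real.exp y * (s * Real.exp y)) / (D y) ^ 2) y :=
      ((Real.hasDerivAt_exp y).const_mul s).div (hDd y) (hDpos y).ne'
    have h2 : HasDerivAt (fun y : ℝ => s + y / 4) (1 / 4) y := by
      simpa using ((hasDerivAt_id y).div_const 4).const_add s
    exact h2.sub hq
  have hF''nonneg : ∀ y, 0 ≤ F'' y := fun y => by
    have hDy := hDpos y
    have ht : (s * Real.exp y * D y - s * Real.exp y * (s * Real.exp y)) / (D y) ^ 2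
        = (s * Real.exp y / D y) - (s * Real.exp y / D y) ^ 2 := by
      field_simp
    simp only [hF'', ht]
    nlinarith [sq_nonneg (s * Real.exp y / D y - 1 / 2)]
  have hmonoF' : Monotone F' :=
    monotone_of_deriv_nonneg (fun y => (hF'd y).differentiableAt)
      (fun y => (hF'd y).deriv ▸ hF''nonneg y)
  have hF'0 : F' 0 = 0 := by
    simp only [hF', hD, Real.exp_zero, mul_one]
    have : 1 - s + s = 1 := by ring
    rw [this]; simp
  have hF0 : F 0 = 0 := by
    simp only [hF, hD, Real.exp_zero, mul_one, mul_zero]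
    have : 1 - s + s = 1 := by ring
    rw [this]; simp
  have hFdiff : Differentiable ℝ F := fun y => (hFd y).differentiableAt
  have hFx : 0 ≤ F x := by
    rcases le_or_gt 0 x with hx | hx
    · have hm : MonotoneOn F (Set.Ici 0) := by
        apply monotoneOn_of_deriv_nonneg (convex_Ici 0) hFdiff.continuous.continuousOn
          (hFdiff.differentiableOn)
        intro y hy
        rw [(hFd y).deriv]
        have : (0:ℝ) ≤ y := le_of_lt (by simpa using hy)
        calc (0:ℝ) = F' 0 := hF'0.symm
          _ ≤ F' y := hmonoF' this
      have := hm (Set.self_mem_Ici) (Set.mem_Ici.2 hx) hx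
      rwa [hF0] at this
    · have hm : AntitoneOn F (Set.Iic 0) := by
        apply antitoneOn_of_deriv_nonpos (convex_Iic 0) hFdiff.continuous.continuousOn
          (hFdiff.differentiableOn)
        intro y hy
        rw [(hFd y).deriv]
        have hy0 : y ≤ (0:ℝ) := le_of_lt (by simpa using hy)
        calc F' y ≤ F' 0 := hmonoF' hy0
          _ = 0 := hF'0
      have := hm (Set.mem_Iic.2 hx.le) (Set.self_mem_Iic) hx.le
      rwa [hF0] at this
  have hlog : Real.log (D x) ≤ s * x + x ^ 2 / 8 := by
    simp only [hF] at hFx; linarith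
  calc D x = Real.exp (Real.log (D x)) := (Real.exp_log (hDpos x)).symm
    _ ≤ Real.exp (s * x + x ^ 2 / 8) := Real.exp_le_exp.2 hlog

lemma mgf_eq {I : Type*} [Fintype I] [DecidableEq I] (s θ : ℝ) (J : Finset I) :
    ∑ ω : I → Bool, W s ω * Real.exp (θ * Xf J ω)
      = (1 - s + s * Real.exp θ) ^ J.card := by
  classical
  have key : ∀ ω : I → Bool, W s ω * Real.exp (θ * Xf J ω)
      = ∏ i, ((if ω i then s else 1 - s) *
          (if i ∈ J then (if ω i then Real.exp θ else 1) else 1)) := by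
    intro ω
    rw [Finset.prod_mul_distrib]
    congr 1
    have h1 : θ * Xf J ω = ∑ i ∈ J, (if ω i then θ else 0) := by
      rw [Xf, Finset.mul_sum]
      exact Finset.sum_congr rfl fun i _ => by by_cases h : ω i <;> simp [h]
    rw [h1, Real.exp_sum, Finset.prod_ite_mem, Finset.univ_inter]
    exact (Finset.prod_congr rfl fun i _ => by
      by_cases h : ω i <;> simp [h]).symm
  simp_rw [key]
  have h2 := Finset.prod_univ_sum (fun _ : I => (Finset.univ : Finset Bool))
    (fun i b => ((if b then s else 1 - s) *
          (if i ∈ J then (if b then Real.exp θ else 1) else 1)))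
  rw [Fintype.piFinset_univ] at h2
  rw [← h2]
  have h3 : ∀ i : I, (∑ b : Bool, ((if b then s else 1 - s) *
          (if i ∈ J then (if b then Real.exp θ else 1) else 1)))
      = if i ∈ J then (1 - s + s * Real.exp θ) else 1 := by
    intro i
    rw [Fintype.sum_bool]
    by_cases h : i ∈ J <;> simp [h] <;> ring
  simp_rw [h3]
  rw [Finset.prod_ite_mem, Finset.univ_inter, Finset.prod_const]

lemma tail_bound {I : Type*} [Fintype I] [DecidableEq I] {s : ℝ}
    (hs0 : 0 ≤ s) (hs1 : s ≤ 1) (J : Finset I) (θ c : ℝ) :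
    ∑ ω ∈ Finset.univ.filter (fun ω : I → Bool => c ≤ θ * Xf J ω), W s ω
      ≤ Real.exp (-c) * (1 - s + s * Real.exp θ) ^ J.card := by
  classical
  have step1 : ∑ ω ∈ Finset.univ.filter (fun ω : I → Bool => c ≤ θ * Xf J ω), W s ω
      ≤ ∑ ω ∈ Finset.univ.filter (fun ω : I → Bool => c ≤ θ * Xf J ω),
          W s ω * Real.exp (θ * Xf J ω - c) := by
    refine Finset.sum_le_sum fun ω hω => ?_
    have hc : c ≤ θ * Xf J ω := (Finset.mem_filter.1 hω).2
    have h1 : (1:ℝ) ≤ Real.exp (θ * Xf J ω - c) := Real.one_le_exp (by linarith)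
    nlinarith [W_nonneg hs0 hs1 ω]
  have step2 : ∑ ω ∈ Finset.univ.filter (fun ω : I → Bool => c ≤ θ * Xf J ω),
          W s ω * Real.exp (θ * Xf J ω - c)
      ≤ ∑ ω : I → Bool, W s ω * Real.exp (θ * Xf J ω - c) :=
    Finset.sum_le_sum_of_subset_of_nonneg (Finset.filter_subset _ _)
      (fun ω _ _ => mul_nonneg (W_nonneg hs0 hs1 ω) (Real.exp_pos _).le)
  have step3 : ∑ ω : I → Bool, W s ω * Real.exp (θ * Xf J ω - c)
      = Real.exp (-c) * (1 - s + s * Real.exp θ) ^ J.card := by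
    rw [← mgf_eq s θ J, Finset.mul_sum]
    refine Finset.sum_congr rfl fun ω _ => ?_
    rw [Real.exp_sub, div_eq_mul_inv, ← Real.exp_neg]
    ring
  linarith

lemma pair_bound {I : Type*} [Fintype I] [DecidableEq I] {s : ℝ}
    (hs0 : 0 ≤ s) (hs1 : s ≤ 1) {ε : ℝ} (hε : 0 < ε) (J : Finset I) :
    ∑ ω ∈ Finset.univ.filter
        (fun ω : I → Bool => ε * J.card < |Xf J ω - s * J.card|), W s ω
      ≤ 2 * Real.exp (-2 * ε ^ 2 * J.card) := by
  classical
  set n : ℝ := (J.card : ℝ) with hn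
  have hn0 : 0 ≤ n := Nat.cast_nonneg _
  have pow_le : ∀ θ : ℝ, (1 - s + s * Real.exp θ) ^ J.card
      ≤ Real.exp ((s * θ + θ ^ 2 / 8) * n) := by
    intro θ
    calc (1 - s + s * Real.exp θ) ^ J.card
        ≤ (Real.exp (s * θ + θ ^ 2 / 8)) ^ J.card :=
          pow_le_pow_left₀ (by nlinarith [Real.exp_pos θ]) (hoeffding_mgf s hs0 hs1 θ) _
      _ = Real.exp ((s * θ + θ ^ 2 / 8) * n) := by
          rw [← Real.exp_nat_mul, mul_comm]
  have habs : ∀ ω : I → Bool,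
      (ε * n < |Xf J ω - s * n|) ↔
        (ε * n < Xf J ω - s * n ∨ ε * n < -(Xf J ω - s * n)) := fun ω => lt_abs
  rw [Finset.filter_congr (fun ω _ => by rw [habs ω]), Finset.filter_or]
  have hdisj : Disjoint
      (Finset.univ.filter (fun ω : I → Bool => ε * n < Xf J ω - s * n))
      (Finset.univ.filter (fun ω : I → Bool => ε * n < -(Xf J ω - s * n))) := by
    rw [Finset.disjoint_filter]
    intro ω _ h1 h2
    have : 0 ≤ ε * n := mul_nonneg hε.le hn0
    linarith
  rw [Finset.sum_union hdisj]
  have upper : ∑ ω ∈ Finset.univ.filter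
        (fun ω : I → Bool => ε * n < Xf J ω - s * n), W s ω
      ≤ Real.exp (-2 * ε ^ 2 * n) := by
    have hsub : Finset.univ.filter (fun ω : I → Bool => ε * n < Xf J ω - s * n)
        ⊆ Finset.univ.filter
          (fun ω : I → Bool => 4 * ε * (s * n + ε * n) ≤ 4 * ε * Xf J ω) := by
      apply Finset.monotone_filter_right
      intro ω _ hω
      nlinarith
    calc ∑ ω ∈ Finset.univ.filter
            (fun ω : I → Bool => ε * n < Xf J ω - s * n), W s ω
        ≤ ∑ ω ∈ Finset.univ.filter
            (fun ω : I → Bool => 4 * ε * (s * n + ε * n) ≤ 4 * ε * Xf J ω), W s ω :=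
          Finset.sum_le_sum_of_subset_of_nonneg hsub
            (fun ω _ _ => W_nonneg hs0 hs1 ω)
      _ ≤ Real.exp (-(4 * ε * (s * n + ε * n))) * (1 - s + s * Real.exp (4 * ε)) ^ J.card :=
          tail_bound hs0 hs1 J _ _
      _ ≤ Real.exp (-(4 * ε * (s * n + ε * n))) *
            Real.exp ((s * (4 * ε) + (4 * ε) ^ 2 / 8) * n) := by
          exact mul_le_mul_of_nonneg_left (pow_le _) (Real.exp_pos _).le
      _ = Real.exp (-2 * ε ^ 2 * n) := by
          rw [← Real.exp_add]; congr 1; ring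
  have lower : ∑ ω ∈ Finset.univ.filter
        (fun ω : I → Bool => ε * n < -(Xf J ω - s * n)), W s ω
      ≤ Real.exp (-2 * ε ^ 2 * n) := by
    have hsub : Finset.univ.filter (fun ω : I → Bool => ε * n < -(Xf J ω - s * n))
        ⊆ Finset.univ.filter
          (fun ω : I → Bool => -(4 * ε) * (s * n - ε * n) ≤ -(4 * ε) * Xf J ω) := by
      apply Finset.monotone_filter_right
      intro ω _ hω
      nlinarith
    calc ∑ ω ∈ Finset.univ.filter
            (fun ω : I → Bool => ε * n < -(Xf J ω - s * n)), W s ω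
        ≤ ∑ ω ∈ Finset.univ.filter
            (fun ω : I → Bool => -(4 * ε) * (s * n - ε * n) ≤ -(4 * ε) * Xf J ω), W s ω :=
          Finset.sum_le_sum_of_subset_of_nonneg hsub
            (fun ω _ _ => W_nonneg hs0 hs1 ω)
      _ ≤ Real.exp (-(-(4 * ε) * (s * n - ε * n))) *
            (1 - s + s * Real.exp (-(4 * ε))) ^ J.card :=
          tail_bound hs0 hs1 J _ _
      _ ≤ Real.exp (-(-(4 * ε) * (s * n - ε * n))) *
            Real.exp ((s * (-(4 * ε)) + (-(4 * ε)) ^ 2 / 8) * n) := by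
          exact mul_le_mul_of_nonneg_left (pow_le _) (Real.exp_pos _).le
      _ = Real.exp (-2 * ε ^ 2 * n) := by
          rw [← Real.exp_add]; congr 1; ring
  linarith

/-- A random bipartite graph on parts of size `g`, with each of the `g²` edges present
independently with probability `s`, fails to be `ε`-uniform with probability at most
`2^{−2ε⁴g² + 2g + 2 log₂ g + 1}`. -/
theorem prob_not_eps_uniform_le (g : ℕ) (hg : 0 < g) (s : ℝ) (hs : s ∈ Set.Icc (0:ℝ) 1)
    (ε : ℝ) (hε : 0 < ε) (hε1 : ε < 1) :
    (Measure.pi (fun _ : Fin g × Fin g =>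
        (PMF.bernoulli (Real.toNNReal s)
          (by simpa using Real.toNNReal_le_one.2 hs.2)).toMeasure))
      {ω : (Fin g × Fin g) → Bool |
        ∃ A B : Finset (Fin g),
          ε * g ≤ A.card ∧ ε * g ≤ B.card ∧
          ε < |(∑ a ∈ A, ∑ b ∈ B, if ω (a, b) then (1:ℝ) else 0)
                / (A.card * B.card) - s|}
      ≤ ENNReal.ofReal
          ((2:ℝ) ^ (-2 * ε ^ 4 * g ^ 2 + 2 * g + 2 * Real.logb 2 g + 1)) := by
  classical
  set P : ((Fin g × Fin g) → Bool) → Prop := fun ω =>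
    ∃ A B : Finset (Fin g),
      ε * g ≤ A.card ∧ ε * g ≤ B.card ∧
      ε < |(∑ a ∈ A, ∑ b ∈ B, if ω (a, b) then (1:ℝ) else 0)
            / (A.card * B.card) - s| with hP
  rw [measure_pi_bool s hs.1 hs.2 _ P]
  apply ENNReal.ofReal_le_ofReal
  -- the picking function
  set pick : ((Fin g × Fin g) → Bool) → Finset (Fin g) × Finset (Fin g) := fun ω =>
    if h : P ω then ⟨h.choose, h.choose_spec.choose⟩ else (∅, ∅) with hpick
  have pick_spec : ∀ ω, P ω →
      ε * g ≤ (pick ω).1.card ∧ ε * g ≤ (pick ω).2.card ∧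
      ε < |(∑ a ∈ (pick ω).1, ∑ b ∈ (pick ω).2, if ω (a, b) then (1:ℝ) else 0)
        / ((pick ω).1.card * (pick ω).2.card) - s| := by
    intro ω h
    simp only [hpick, dif_pos h]
    exact h.choose_spec.choose_spec
  have hεg : 0 < ε * g := by positivity
  set c : ℝ := -2 * ε ^ 4 * (g:ℝ) ^ 2 with hc
  -- per-fiber bound
  have perq : ∀ q : Finset (Fin g) × Finset (Fin g),
      ∑ ω ∈ (Finset.univ.filter P).filter (fun ω => pick ω = q), W s ω
        ≤ 2 * Real.exp c := by
    intro q
    by_cases hne : ((Finset.univ.filter P).filter (fun ω => pick ω = q)).Nonempty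
    · obtain ⟨ω₀, hω₀⟩ := hne
      have hω₀' := Finset.mem_filter.1 hω₀
      have hPω₀ : P ω₀ := (Finset.mem_filter.1 hω₀'.1).2
      have hq : pick ω₀ = q := hω₀'.2
      obtain ⟨hA, hB, -⟩ := pick_spec ω₀ hPω₀
      rw [hq] at hA hB
      set J : Finset (Fin g × Fin g) := q.1 ×ˢ q.2 with hJ
      have hJcard : (J.card : ℝ) = (q.1.card : ℝ) * (q.2.card : ℝ) := by
        rw [hJ, Finset.card_product]; push_cast; ring
      have hsub : (Finset.univ.filter P).filter (fun ω => pick ω = q)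
          ⊆ Finset.univ.filter
            (fun ω => ε * (J.card : ℝ) < |Xf J ω - s * (J.card : ℝ)|) := by
        intro ω hω
        have hω' := Finset.mem_filter.1 hω
        have hPω : P ω := (Finset.mem_filter.1 hω'.1).2
        have hqω : pick ω = q := hω'.2
        obtain ⟨hA', hB', hbad⟩ := pick_spec ω hPω
        rw [hqω] at hA' hB' hbad
        refine Finset.mem_filter.2 ⟨Finset.mem_univ _, ?_⟩
        have hXeq : Xf J ω = ∑ a ∈ q.1, ∑ b ∈ q.2, if ω (a, b) then (1:ℝ) else 0 := by
          rw [Xf, hJ, Finset.sum_product]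
        have hab : (0:ℝ) < (q.1.card : ℝ) * (q.2.card : ℝ) := by nlinarith
        rw [hXeq, hJcard]
        have key : |(∑ a ∈ q.1, ∑ b ∈ q.2, if ω (a, b) then (1:ℝ) else 0)
              - s * ((q.1.card:ℝ) * (q.2.card:ℝ))|
            = |(∑ a ∈ q.1, ∑ b ∈ q.2, if ω (a, b) then (1:ℝ) else 0)
                / ((q.1.card:ℝ) * (q.2.card:ℝ)) - s| * ((q.1.card:ℝ) * (q.2.card:ℝ)) := by
          have h2 : ((∑ a ∈ q.1, ∑ b ∈ q.2, if ω (a, b) then (1:ℝ) else 0)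
                / ((q.1.card:ℝ) * (q.2.card:ℝ)) - s) * ((q.1.card:ℝ) * (q.2.card:ℝ))
              = (∑ a ∈ q.1, ∑ b ∈ q.2, if ω (a, b) then (1:ℝ) else 0)
                - s * ((q.1.card:ℝ) * (q.2.card:ℝ)) := by
            rw [sub_mul, div_mul_cancel₀ _ hab.ne']
          rw [← h2, abs_mul, abs_of_pos hab]
        exact lt_of_lt_of_eq (mul_lt_mul_of_pos_right hbad hab) key.symm
      calc ∑ ω ∈ (Finset.univ.filter P).filter (fun ω => pick ω = q), W s ω
          ≤ ∑ ω ∈ Finset.univ.filter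
              (fun ω => ε * (J.card : ℝ) < |Xf J ω - s * (J.card : ℝ)|), W s ω :=
            Finset.sum_le_sum_of_subset_of_nonneg hsub (fun ω _ _ => W_nonneg hs.1 hs.2 ω)
        _ ≤ 2 * Real.exp (-2 * ε ^ 2 * (J.card : ℝ)) := pair_bound hs.1 hs.2 hε J
        _ ≤ 2 * Real.exp c := by
            have hJge : ε ^ 2 * (g:ℝ) ^ 2 ≤ (J.card : ℝ) := by
              rw [hJcard]; nlinarith
            have : c ≤ -2 * ε ^ 2 * (J.card : ℝ) → True := fun _ => trivial
            have hle : -2 * ε ^ 2 * (J.card : ℝ) ≤ c := by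
              rw [hc]; nlinarith
            have := Real.exp_le_exp.2 hle
            linarith
    · rw [Finset.not_nonempty_iff_eq_empty.1 hne, Finset.sum_empty]
      positivity
  -- fiberwise decomposition and counting
  have hfib : ∑ ω ∈ Finset.univ.filter P, W s ω
      = ∑ q : Finset (Fin g) × Finset (Fin g),
          ∑ ω ∈ (Finset.univ.filter P).filter (fun ω => pick ω = q), W s ω :=
    (Finset.sum_fiberwise_of_maps_to (fun ω _ => Finset.mem_univ (pick ω)) _).symm
  rw [hfib]
  have hcount : ∑ q : Finset (Fin g) × Finset (Fin g),
          ∑ ω ∈ (Finset.univ.filter P).filter (fun ω => pick ω = q), W s ω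
      ≤ ((2:ℝ) ^ g * 2 ^ g) * (2 * Real.exp c) := by
    calc ∑ q : Finset (Fin g) × Finset (Fin g),
          ∑ ω ∈ (Finset.univ.filter P).filter (fun ω => pick ω = q), W s ω
        ≤ ∑ _q : Finset (Fin g) × Finset (Fin g), 2 * Real.exp c :=
          Finset.sum_le_sum fun q _ => perq q
      _ = ((2:ℝ) ^ g * 2 ^ g) * (2 * Real.exp c) := by
          rw [Finset.sum_const, Finset.card_univ, Fintype.card_prod,
            Fintype.card_finset, Fintype.card_fin, nsmul_eq_mul]
          push_cast
          ring
  refine hcount.trans ?_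
  -- final numeric comparison
  have hlog2 : Real.log 2 ≤ 1 := by
    have := Real.log_le_sub_one_of_pos (by norm_num : (0:ℝ) < 2)
    linarith
  have hc0 : c ≤ 0 := by
    rw [hc]
    have : (0:ℝ) ≤ ε ^ 4 * (g:ℝ) ^ 2 := by positivity
    nlinarith
  have hexpc : Real.exp c ≤ (2:ℝ) ^ c := by
    rw [Real.rpow_def_of_pos (by norm_num : (0:ℝ) < 2)]
    apply Real.exp_le_exp.2
    nlinarith
  have hL : (1:ℝ) ≤ (2:ℝ) ^ (2 * Real.logb 2 (g:ℝ)) := by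
    apply Real.one_le_rpow (by norm_num)
    have : (0:ℝ) ≤ Real.logb 2 (g:ℝ) :=
      Real.logb_nonneg (by norm_num) (by exact_mod_cast hg)
    linarith
  have h2g : (2:ℝ) ^ (2 * (g:ℝ)) = (2:ℝ) ^ g * 2 ^ g := by
    have : (2 * (g:ℝ)) = ((g + g : ℕ) : ℝ) := by push_cast; ring
    rw [this, Real.rpow_natCast, pow_add]
  have hRHS : (2:ℝ) ^ (c + 2 * (g:ℝ) + 2 * Real.logb 2 (g:ℝ) + 1)
      = (2:ℝ) ^ c * (2:ℝ) ^ (2 * (g:ℝ)) * (2:ℝ) ^ (2 * Real.logb 2 (g:ℝ)) * 2 := by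
    rw [Real.rpow_add (by norm_num : (0:ℝ) < 2),
      Real.rpow_add (by norm_num : (0:ℝ) < 2),
      Real.rpow_add (by norm_num : (0:ℝ) < 2), Real.rpow_one]
  rw [show (-2 * ε ^ 4 * (g:ℝ) ^ 2 + 2 * (g:ℝ) + 2 * Real.logb 2 (g:ℝ) + 1)
      = (c + 2 * (g:ℝ) + 2 * Real.logb 2 (g:ℝ) + 1) from by rw [hc], hRHS, ← h2g]
  have hpos : (0:ℝ) < (2:ℝ) ^ (2 * (g:ℝ)) := Real.rpow_pos_of_pos (by norm_num) _
  calc (2:ℝ) ^ (2 * (g:ℝ)) * (2 * Real.exp c)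
      ≤ (2:ℝ) ^ (2 * (g:ℝ)) * (2 * (2:ℝ) ^ c) := by
        apply mul_le_mul_of_nonneg_left _ hpos.le
        linarith
    _ = (2:ℝ) ^ c * (2:ℝ) ^ (2 * (g:ℝ)) * 1 * 2 := by ring
    _ ≤ (2:ℝ) ^ c * (2:ℝ) ^ (2 * (g:ℝ)) * (2:ℝ) ^ (2 * Real.logb 2 (g:ℝ)) * 2 := by
        apply mul_le_mul_of_nonneg_right _ (by norm_num : (0:ℝ) ≤ 2)
        apply mul_le_mul_of_nonneg_left hL
        positivity
end

section
/- Let W, U be finite disjoint vertex sets in a graph on n vertices, and suppose the pair (W,U) is not ε-uniform, as witnessed by W₁ ⊆ W, U₁ ⊆ U with |W₁| ≥ ε|W|, |U₁| ≥ ε|U| and |d(W₁,U₁) − d(W,U)| ≥ ε. Then q({W₁, W∖W₁}, {U₁, U∖U₁}) > q(W,U) + ε⁴ |W||U|/n². -/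
open Finset
open scoped Classical

/-- Edge density between two finite vertex sets of a graph. -/
noncomputable def edgeDens {V : Type*} (G : SimpleGraph V) (A B : Finset V) : ℝ :=
  (∑ a ∈ A, ∑ b ∈ B, if G.Adj a b then (1:ℝ) else 0) / (A.card * B.card)

/-- The energy `q(X,Y) = (|X||Y|/n²) d(X,Y)²` of a pair of vertex sets in a graph on
`n` vertices. -/
noncomputable def pairEnergy {V : Type*} (G : SimpleGraph V) (n : ℕ)
    (X Y : Finset V) : ℝ :=
  ((X.card : ℝ) * Y.card / (n : ℝ) ^ 2) * (edgeDens G X Y) ^ 2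

/-! ### Auxiliary definitions and lemmas -/

/-- The (real-valued) number of edges between two finite vertex sets. -/
noncomputable def eCnt {V : Type*} (G : SimpleGraph V) (A B : Finset V) : ℝ :=
  ∑ a ∈ A, ∑ b ∈ B, if G.Adj a b then (1:ℝ) else 0

lemma edgeDens_eq {V : Type*} (G : SimpleGraph V) (A B : Finset V) :
    edgeDens G A B = eCnt G A B / ((A.card : ℝ) * B.card) := rfl

@[simp] lemma eCnt_empty_left {V : Type*} (G : SimpleGraph V) (B : Finset V) :
    eCnt G ∅ B = 0 := by simp [eCnt]

@[simp] lemma eCnt_empty_right {V : Type*} (G : SimpleGraph V) (A : Finset V) :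
    eCnt G A ∅ = 0 := by simp [eCnt]

lemma eCnt_split_left {V : Type*} [DecidableEq V] (G : SimpleGraph V) {A₁ A : Finset V}
    (h : A₁ ⊆ A) (B : Finset V) :
    eCnt G A B = eCnt G A₁ B + eCnt G (A \ A₁) B := by
  unfold eCnt
  rw [← Finset.sum_sdiff h]
  ring

lemma eCnt_split_right {V : Type*} [DecidableEq V] (G : SimpleGraph V) (A : Finset V)
    {B₁ B : Finset V} (h : B₁ ⊆ B) :
    eCnt G A B = eCnt G A B₁ + eCnt G A (B \ B₁) := by
  unfold eCnt
  rw [← Finset.sum_add_distrib]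
  refine Finset.sum_congr rfl fun a _ => ?_
  rw [← Finset.sum_sdiff h]
  ring

lemma pairEnergy_eq {V : Type*} (G : SimpleGraph V) (n : ℕ) (A B : Finset V) :
    pairEnergy G n A B = (eCnt G A B) ^ 2 / ((A.card : ℝ) * B.card) / (n : ℝ) ^ 2 := by
  unfold pairEnergy
  rw [edgeDens_eq]
  rcases eq_or_ne A ∅ with rfl | hA
  · simp
  rcases eq_or_ne B ∅ with rfl | hB
  · simp
  have hA' : (0:ℝ) < A.card := by
    exact_mod_cast Finset.card_pos.mpr (Finset.nonempty_iff_ne_empty.mpr hA)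
  have hB' : (0:ℝ) < B.card := by
    exact_mod_cast Finset.card_pos.mpr (Finset.nonempty_iff_ne_empty.mpr hB)
  rcases eq_or_ne ((n:ℝ) ^ 2) 0 with hn | hn
  · rw [hn]; simp
  · field_simp

lemma cs_three (m2 m3 m4 c2 c3 c4 : ℝ) (h2 : 0 ≤ m2) (h3 : 0 ≤ m3) (h4 : 0 ≤ m4) :
    (m2 * c2 + m3 * c3 + m4 * c4) ^ 2
      ≤ (m2 + m3 + m4) * (m2 * c2 ^ 2 + m3 * c3 ^ 2 + m4 * c4 ^ 2) := by
  nlinarith [mul_nonneg (mul_nonneg h2 h3) (sq_nonneg (c2 - c3)),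
    mul_nonneg (mul_nonneg h2 h4) (sq_nonneg (c2 - c4)),
    mul_nonneg (mul_nonneg h3 h4) (sq_nonneg (c3 - c4)),
    mul_nonneg h2 (sq_nonneg c2), mul_nonneg h3 (sq_nonneg c3), mul_nonneg h4 (sq_nonneg c4)]

lemma var_final (ab M c1 R ε : ℝ) (hab : 0 < ab) (hM : 0 < M) (hε : 0 < ε)
    (h1 : (ab * c1) ^ 2 ≤ M * R)
    (h2' : ε ^ 4 * (ab + M) * (ab + M) ≤ ab * c1 ^ 2 * (ab + M)) :
    ε ^ 4 * (ab + M) < ab * c1 ^ 2 + R := by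
  have key : ε ^ 4 * (ab + M) * M < (ab * c1 ^ 2 + R) * M := by
    nlinarith [h1, h2', mul_pos (mul_pos (pow_pos hε 4) (by linarith : (0:ℝ) < ab + M)) hab]
  exact lt_of_mul_lt_mul_right key hM.le

lemma energy_key (a b a' b' e1 e2 e3 e4 ε : ℝ)
    (ha : 0 < a) (hb : 0 < b) (ha' : 0 ≤ a') (hb' : 0 ≤ b') (hε : 0 < ε)
    (h2 : b' = 0 → e2 = 0) (h3 : a' = 0 → e3 = 0) (h4 : a' = 0 ∨ b' = 0 → e4 = 0)
    (hpos : 0 < a * b' + a' * b + a' * b')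
    (hA : ε * (a + a') ≤ a) (hB : ε * (b + b') ≤ b)
    (hwit : ε ≤ |e1 / (a * b) - (e1 + e2 + e3 + e4) / ((a + a') * (b + b'))|) :
    ε ^ 4 * ((a + a') * (b + b')) + (e1 + e2 + e3 + e4) ^ 2 / ((a + a') * (b + b'))
      < e1 ^ 2 / (a * b) + e2 ^ 2 / (a * b') + e3 ^ 2 / (a' * b) + e4 ^ 2 / (a' * b') := by
  have hA0 : 0 < a + a' := by linarith
  have hB0 : 0 < b + b' := by linarith
  have hAB : 0 < (a + a') * (b + b') := mul_pos hA0 hB0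
  set d : ℝ := (e1 + e2 + e3 + e4) / ((a + a') * (b + b')) with hd
  set c1 : ℝ := e1 / (a * b) - d with hc1
  set c2 : ℝ := e2 / (a * b') - d with hc2
  set c3 : ℝ := e3 / (a' * b) - d with hc3
  set c4 : ℝ := e4 / (a' * b') - d with hc4
  clear_value d c1 c2 c3 c4
  have hE : e1 + e2 + e3 + e4 = (a + a') * (b + b') * d := by
    rw [hd]; field_simp
  have he1 : e1 = a * b * (d + c1) := by
    rw [hc1]; field_simp; try ring
  have he2 : e2 = a * b' * (d + c2) := by
    rcases eq_or_lt_of_le hb' with h | h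
    · simp [h2 h.symm, ← h]
    · rw [hc2]; field_simp; try ring
  have he3 : e3 = a' * b * (d + c3) := by
    rcases eq_or_lt_of_le ha' with h | h
    · simp [h3 h.symm, ← h]
    · rw [hc3]; field_simp; try ring
  have he4 : e4 = a' * b' * (d + c4) := by
    rcases eq_or_lt_of_le ha' with h | h
    · simp [h4 (Or.inl h.symm), ← h]
    · rcases eq_or_lt_of_le hb' with h' | h'
      · simp [h4 (Or.inr h'.symm), ← h']
      · rw [hc4]; field_simp; try ring
  have hcon : a * b * c1 + a * b' * c2 + a' * b * c3 + a' * b' * c4 = 0 := by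
    linear_combination hE - he1 - he2 - he3 - he4
  have hq1 : e1 ^ 2 / (a * b) = a * b * (d + c1) ^ 2 := by
    rw [he1]; field_simp
  have hq2 : e2 ^ 2 / (a * b') = a * b' * (d + c2) ^ 2 := by
    rcases eq_or_lt_of_le hb' with h | h
    · simp [h2 h.symm, ← h]
    · rw [he2]; field_simp
  have hq3 : e3 ^ 2 / (a' * b) = a' * b * (d + c3) ^ 2 := by
    rcases eq_or_lt_of_le ha' with h | h
    · simp [h3 h.symm, ← h]
    · rw [he3]; field_simp
  have hq4 : e4 ^ 2 / (a' * b') = a' * b' * (d + c4) ^ 2 := by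
    rcases eq_or_lt_of_le ha' with h | h
    · simp [h4 (Or.inl h.symm), ← h]
    · rcases eq_or_lt_of_le hb' with h' | h'
      · simp [h4 (Or.inr h'.symm), ← h']
      · rw [he4]; field_simp
  have hq0 : (e1 + e2 + e3 + e4) ^ 2 / ((a + a') * (b + b')) = (a + a') * (b + b') * d ^ 2 := by
    rw [hE]; field_simp
  rw [hq0, hq1, hq2, hq3, hq4]
  -- reduce to the variance bound
  have hc1sq : ε ^ 2 ≤ c1 ^ 2 := by
    have h := pow_le_pow_left₀ hε.le hwit 2
    rwa [sq_abs] at h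
  have habge : ε ^ 2 * ((a + a') * (b + b')) ≤ a * b := by
    calc ε ^ 2 * ((a + a') * (b + b')) = (ε * (a + a')) * (ε * (b + b')) := by ring
      _ ≤ a * b := mul_le_mul hA hB (by positivity) ha.le
  clear hE he1 he2 he3 he4 hq0 hq1 hq2 hq3 hq4 hd hc1 hc2 hc3 hc4 h2 h3 h4 hwit
  have h1 : (a * b * c1) ^ 2
      ≤ (a * b' + a' * b + a' * b') * (a * b' * c2 ^ 2 + a' * b * c3 ^ 2 + a' * b' * c4 ^ 2) := by
    have hrw : a * b * c1 = -(a * b' * c2 + a' * b * c3 + a' * b' * c4) := by linear_combination hcon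
    rw [hrw, neg_sq]
    exact cs_three _ _ _ _ _ _ (mul_nonneg ha.le hb') (mul_nonneg ha' hb.le) (mul_nonneg ha' hb')
  have h2' : ε ^ 4 * ((a + a') * (b + b')) * ((a + a') * (b + b'))
      ≤ a * b * c1 ^ 2 * ((a + a') * (b + b')) := by
    have hm := mul_le_mul habge hc1sq (sq_nonneg ε) (by positivity : (0:ℝ) ≤ a * b)
    have hm2 := mul_le_mul_of_nonneg_right hm hAB.le
    calc ε ^ 4 * ((a + a') * (b + b')) * ((a + a') * (b + b'))
        = ε ^ 2 * ((a + a') * (b + b')) * ε ^ 2 * ((a + a') * (b + b')) := by ring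
      _ ≤ a * b * c1 ^ 2 * ((a + a') * (b + b')) := hm2
  have hS : ε ^ 4 * ((a + a') * (b + b'))
      < a * b * c1 ^ 2 + (a * b' * c2 ^ 2 + a' * b * c3 ^ 2 + a' * b' * c4 ^ 2) := by
    have hAB' : (a + a') * (b + b') = a * b + (a * b' + a' * b + a' * b') := by ring
    have := var_final (a * b) (a * b' + a' * b + a' * b') c1
      (a * b' * c2 ^ 2 + a' * b * c3 ^ 2 + a' * b' * c4 ^ 2) ε (mul_pos ha hb) hpos hε
      h1 (by rw [← hAB']; exact h2')
    rwa [← hAB'] at this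
  have hexp : a * b * (d + c1) ^ 2 + a * b' * (d + c2) ^ 2 + a' * b * (d + c3) ^ 2
        + a' * b' * (d + c4) ^ 2
      = (a + a') * (b + b') * d ^ 2
        + 2 * d * (a * b * c1 + a * b' * c2 + a' * b * c3 + a' * b' * c4)
        + (a * b * c1 ^ 2 + (a * b' * c2 ^ 2 + a' * b * c3 ^ 2 + a' * b' * c4 ^ 2)) := by ring
  rw [hexp, hcon, mul_zero, add_zero]
  linarith [hS]

/-- Energy boost from an irregularity witness: if `W₁ ⊆ W`, `U₁ ⊆ U` witness that
`(W,U)` is not `ε`-uniform, then refining by these sets increases the energy by more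
than `ε⁴|W||U|/n²`. -/
theorem energy_boost {V : Type*} [DecidableEq V] (G : SimpleGraph V) (n : ℕ)
    (hn : 0 < n) (ε : ℝ) (hε : 0 < ε)
    (W U : Finset V) (hWU : Disjoint W U)
    (W₁ U₁ : Finset V) (hW₁ : W₁ ⊆ W) (hU₁ : U₁ ⊆ U)
    (hW₁card : ε * W.card ≤ W₁.card) (hU₁card : ε * U.card ≤ U₁.card)
    (hwit : ε ≤ |edgeDens G W₁ U₁ - edgeDens G W U|) :
    pairEnergy G n W U + ε ^ 4 * ((W.card : ℝ) * U.card / (n : ℝ) ^ 2)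
      < pairEnergy G n W₁ U₁ + pairEnergy G n W₁ (U \ U₁)
        + pairEnergy G n (W \ W₁) U₁ + pairEnergy G n (W \ W₁) (U \ U₁) := by
  -- nonemptiness of the witness sets
  have hdensL : ∀ A B : Finset V, A = ∅ → edgeDens G A B = 0 := by
    intro A B h; subst h; simp [edgeDens]
  have hW₁ne : W₁.Nonempty := by
    rw [Finset.nonempty_iff_ne_empty]
    intro h
    have hW : W = ∅ := by
      by_contra hW
      have h1 : (0:ℝ) < W.card := by
        exact_mod_cast Finset.card_pos.mpr (Finset.nonempty_iff_ne_empty.mpr hW)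
      have h2 : (W₁.card:ℝ) = 0 := by simp [h]
      nlinarith [hW₁card]
    rw [hdensL _ _ h, hdensL _ _ hW] at hwit
    simp at hwit; linarith
  have hdensR : ∀ A B : Finset V, B = ∅ → edgeDens G A B = 0 := by
    intro A B h; subst h; simp [edgeDens]
  have hU₁ne : U₁.Nonempty := by
    rw [Finset.nonempty_iff_ne_empty]
    intro h
    have hU : U = ∅ := by
      by_contra hU
      have h1 : (0:ℝ) < U.card := by
        exact_mod_cast Finset.card_pos.mpr (Finset.nonempty_iff_ne_empty.mpr hU)
      have h2 : (U₁.card:ℝ) = 0 := by simp [h]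
      nlinarith [hU₁card]
    rw [hdensR _ _ h, hdensR _ _ hU] at hwit
    simp at hwit; linarith
  have ha : (0:ℝ) < W₁.card := by exact_mod_cast Finset.card_pos.mpr hW₁ne
  have hb : (0:ℝ) < U₁.card := by exact_mod_cast Finset.card_pos.mpr hU₁ne
  have ha' : (0:ℝ) ≤ ((W \ W₁).card : ℝ) := by positivity
  have hb' : (0:ℝ) ≤ ((U \ U₁).card : ℝ) := by positivity
  have hAeq : (W.card:ℝ) = (W₁.card:ℝ) + ((W \ W₁).card : ℝ) := by
    have h := Finset.card_sdiff_add_card_eq_card hW₁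
    push_cast [← h]; ring
  have hBeq : (U.card:ℝ) = (U₁.card:ℝ) + ((U \ U₁).card : ℝ) := by
    have h := Finset.card_sdiff_add_card_eq_card hU₁
    push_cast [← h]; ring
  -- the refinement is nontrivial
  have hnd : W \ W₁ ≠ ∅ ∨ U \ U₁ ≠ ∅ := by
    by_contra h
    push_neg at h
    have h1 : W₁ = W :=
      Finset.Subset.antisymm hW₁ (Finset.sdiff_eq_empty_iff_subset.mp h.1)
    have h2 : U₁ = U :=
      Finset.Subset.antisymm hU₁ (Finset.sdiff_eq_empty_iff_subset.mp h.2)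
    rw [h1, h2] at hwit
    simp at hwit; linarith
  have hpos : 0 < (W₁.card:ℝ) * ((U \ U₁).card : ℝ) + ((W \ W₁).card : ℝ) * (U₁.card:ℝ)
      + ((W \ W₁).card : ℝ) * ((U \ U₁).card : ℝ) := by
    rcases hnd with h | h
    · have h1 : (0:ℝ) < ((W \ W₁).card : ℝ) := by
        exact_mod_cast Finset.card_pos.mpr (Finset.nonempty_iff_ne_empty.mpr h)
      nlinarith [mul_pos h1 hb, mul_nonneg ha.le hb', mul_nonneg h1.le hb']
    · have h1 : (0:ℝ) < ((U \ U₁).card : ℝ) := by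
        exact_mod_cast Finset.card_pos.mpr (Finset.nonempty_iff_ne_empty.mpr h)
      nlinarith [mul_pos ha h1, mul_nonneg ha' hb.le, mul_nonneg ha' h1.le]
  -- zero conventions
  have hz2 : ((U \ U₁).card : ℝ) = 0 → eCnt G W₁ (U \ U₁) = 0 := by
    intro h
    have : U \ U₁ = ∅ := Finset.card_eq_zero.mp (by exact_mod_cast h)
    simp [this]
  have hz3 : ((W \ W₁).card : ℝ) = 0 → eCnt G (W \ W₁) U₁ = 0 := by
    intro h
    have : W \ W₁ = ∅ := Finset.card_eq_zero.mp (by exact_mod_cast h)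
    simp [this]
  have hz4 : ((W \ W₁).card : ℝ) = 0 ∨ ((U \ U₁).card : ℝ) = 0 →
      eCnt G (W \ W₁) (U \ U₁) = 0 := by
    rintro (h | h)
    · have : W \ W₁ = ∅ := Finset.card_eq_zero.mp (by exact_mod_cast h)
      simp [this]
    · have : U \ U₁ = ∅ := Finset.card_eq_zero.mp (by exact_mod_cast h)
      simp [this]
  -- edge-count splitting
  have hsplit : eCnt G W U = eCnt G W₁ U₁ + eCnt G W₁ (U \ U₁)
      + eCnt G (W \ W₁) U₁ + eCnt G (W \ W₁) (U \ U₁) := by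
    rw [eCnt_split_left G hW₁ U, eCnt_split_right G W₁ hU₁, eCnt_split_right G (W \ W₁) hU₁]
    ring
  -- translate the witness hypothesis
  rw [edgeDens_eq, edgeDens_eq, hsplit, hAeq, hBeq] at hwit
  have key := energy_key ((W₁.card:ℝ)) ((U₁.card:ℝ)) (((W \ W₁).card : ℝ))
    (((U \ U₁).card : ℝ)) (eCnt G W₁ U₁) (eCnt G W₁ (U \ U₁)) (eCnt G (W \ W₁) U₁)
    (eCnt G (W \ W₁) (U \ U₁)) ε ha hb ha' hb' hε hz2 hz3 hz4 hpos
    (by rw [← hAeq]; exact hW₁card) (by rw [← hBeq]; exact hU₁card)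
    (by convert hwit using 3 <;> ring)
  have hn2 : (0:ℝ) < ((n:ℝ) ^ 2)⁻¹ := by positivity
  simp only [pairEnergy_eq]
  rw [hsplit, hAeq, hBeq]
  have final := mul_lt_mul_of_pos_right key hn2
  refine lt_of_le_of_lt (le_of_eq ?_) (lt_of_lt_of_le final (le_of_eq ?_)) <;> ring
end
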